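/- arXiv:1010.5079 — 5 statements merged into one kernel-verified Lean document; each statement's English description precedes it below -/
import Mathlib

section
/- For all graphs G and H, with G connected and |G| = n > σ(H), the Ramsey number satisfies R(G,H) ≥ (χ(H)−1)(n−1) + σ(H), where σ(H) is the minimum size of a colour class in a proper χ(H)-colouring of H. -/
open SimpleGraph Finset

/-- `Embeds H G`: there is a copy of `H` in `G` (injective edge-preserving map). -/
def Embeds {α β : Type*} (H : SimpleGraph α) (G : SimpleGraph β) : Prop :=
  ∃ f : α → β, Function.Injective f ∧ ∀ u v, H.Adj u v → G.Adj (f u) (f v)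

/-- `HomTo H G`: there is a graph homomorphism from `H` to `G`. -/
def HomTo {α β : Type*} (H : SimpleGraph α) (G : SimpleGraph β) : Prop :=
  ∃ f : α → β, ∀ u v, H.Adj u v → G.Adj (f u) (f v)

/-- Every red/blue colouring (given by its red graph `R`) of `K_N`
contains a red copy of `G` or a blue copy of `H`. -/
def RamseyProp {α β : Type*} (G : SimpleGraph α) (H : SimpleGraph β) (N : ℕ) : Prop :=
  ∀ R : SimpleGraph (Fin N), Embeds G R ∨ Embeds H Rᶜ

/-- The Ramsey number `R(G,H)`. -/
noncomputable def ramseyNumber {α β : Type*} (G : SimpleGraph α) (H : SimpleGraph β) : ℕ :=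
  sInf {N | RamseyProp G H N}

/-- `σ(H)`: the minimum size of a colour class in a proper colouring of `H`
with exactly `χ(H)` colours. -/
noncomputable def sigmaH {V : Type*} [Fintype V] (H : SimpleGraph V) : ℕ :=
  sInf { s | ∃ C : H.Coloring (Fin H.chromaticNumber.toNat), ∃ i,
      s = Nat.card {v // C v = i} }

/-- The `k`-th power of the path on `n` vertices. -/
def pathPower (n k : ℕ) : SimpleGraph (Fin n) where
  Adj i j := i ≠ j ∧ Nat.dist i.val j.val ≤ k
  symm := by
    constructor
    intro i j h
    exact ⟨Ne.symm h.1, by rw [Nat.dist_comm]; exact h.2⟩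
  loopless := by
    constructor
    intro i h
    exact h.1 rfl

/-- The `k`-th power of the cycle on `n` vertices. -/
def cyclePower (n k : ℕ) : SimpleGraph (Fin n) where
  Adj i j := i ≠ j ∧ min (Nat.dist i.val j.val) (n - Nat.dist i.val j.val) ≤ k
  symm := by
    constructor
    intro i j h
    refine ⟨Ne.symm h.1, ?_⟩
    rw [Nat.dist_comm]
    exact h.2
  loopless := by
    constructor
    intro i h
    exact h.1 rfl


lemma ramsey_finset : ∀ N a b : ℕ, a + b ≤ N → ∃ M : ℕ, ∀ R : SimpleGraph (Fin M),
    (∃ t : Finset (Fin M), a ≤ t.card ∧ ∀ x ∈ t, ∀ y ∈ t, x ≠ y → R.Adj x y) ∨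
    (∃ t : Finset (Fin M), b ≤ t.card ∧ ∀ x ∈ t, ∀ y ∈ t, x ≠ y → ¬ R.Adj x y) := by
  intro N
  induction N with
  | zero =>
    intro a b hab
    exact ⟨0, fun R => Or.inl ⟨∅, by omega, by simp⟩⟩
  | succ N ih =>
    intro a b hab
    match a, b with
    | 0, b => exact ⟨0, fun R => Or.inl ⟨∅, by omega, by simp⟩⟩
    | a, 0 => exact ⟨0, fun R => Or.inr ⟨∅, by omega, by simp⟩⟩
    | a+1, b+1 =>
      obtain ⟨M1, h1⟩ := ih a (b+1) (by omega)
      obtain ⟨M2, h2⟩ := ih (a+1) b (by omega)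
      refine ⟨M1 + M2 + 1, fun R => ?_⟩
      classical
      set v0 : Fin (M1+M2+1) := ⟨M1+M2, by omega⟩ with hv0
      set A : Finset (Fin (M1+M2+1)) := univ.filter (fun x => R.Adj v0 x) with hA
      set B : Finset (Fin (M1+M2+1)) := univ.filter (fun x => x ≠ v0 ∧ ¬ R.Adj v0 x) with hB
      have hcover : (univ : Finset (Fin (M1+M2+1))) ⊆ A ∪ B ∪ {v0} := by
        intro x _
        simp only [hA, hB, Finset.mem_union, Finset.mem_filter, Finset.mem_univ, true_and,
          Finset.mem_singleton]
        by_cases hx : x = v0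
        · tauto
        · by_cases hadj : R.Adj v0 x <;> tauto
      have hcard : M1 + M2 ≤ A.card + B.card := by
        have h1 := Finset.card_le_card hcover
        have h2 := Finset.card_union_le (A ∪ B) ({v0} : Finset (Fin (M1+M2+1)))
        have h3 := Finset.card_union_le A B
        simp only [Finset.card_univ, Fintype.card_fin, Finset.card_singleton] at h1 h2 h3
        omega
      rcases (by omega : M1 ≤ A.card ∨ M2 ≤ B.card) with hle | hle
      · -- red neighbourhood big
        obtain ⟨A', hsub, hAc⟩ := Finset.exists_subset_card_eq hle
        set e := A'.orderIsoOfFin hAc with he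
        set emb : Fin M1 → Fin (M1+M2+1) := fun i => (e i : Fin (M1+M2+1)) with hemb
        have hinj : Function.Injective emb := fun i j hij => by
          apply e.injective; exact Subtype.ext hij
        have hmem : ∀ i, emb i ∈ A := fun i => hsub (e i).2
        have hadjv0 : ∀ i, R.Adj v0 (emb i) := by
          intro i; have := hmem i; simp only [hA, Finset.mem_filter] at this; exact this.2
        rcases h1 (SimpleGraph.comap emb R) with ⟨t, htc, hc⟩ | ⟨t, htc, hc⟩
        · refine Or.inl ⟨insert v0 (t.image emb), ?_, ?_⟩
          · have hnot : v0 ∉ t.image emb := by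
              simp only [Finset.mem_image, not_exists]
              rintro x ⟨hx, hex⟩
              exact (R.irrefl) (hex ▸ hadjv0 x)
            rw [Finset.card_insert_of_notMem hnot,
              Finset.card_image_of_injective _ hinj]
            omega
          · intro x hx y hy hxy
            simp only [Finset.mem_insert, Finset.mem_image] at hx hy
            rcases hx with rfl | ⟨i, hi, rfl⟩
            · rcases hy with rfl | ⟨j, hj, rfl⟩
              · exact absurd rfl hxy
              · exact hadjv0 j
            · rcases hy with rfl | ⟨j, hj, rfl⟩
              · exact (hadjv0 i).symm
              · exact hc i hi j hj (fun h => hxy (by rw [h]))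
        · refine Or.inr ⟨t.image emb, ?_, ?_⟩
          · rw [Finset.card_image_of_injective _ hinj]; omega
          · rintro x hx y hy hxy
            simp only [Finset.mem_image] at hx hy
            obtain ⟨i, hi, rfl⟩ := hx
            obtain ⟨j, hj, rfl⟩ := hy
            exact hc i hi j hj (fun h => hxy (by rw [h]))
      · -- blue neighbourhood big
        obtain ⟨B', hsub, hBc⟩ := Finset.exists_subset_card_eq hle
        set e := B'.orderIsoOfFin hBc with he
        set emb : Fin M2 → Fin (M1+M2+1) := fun i => (e i : Fin (M1+M2+1)) with hemb
        have hinj : Function.Injective emb := fun i j hij => by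
          apply e.injective; exact Subtype.ext hij
        have hmem : ∀ i, emb i ∈ B := fun i => hsub (e i).2
        have hprop : ∀ i, emb i ≠ v0 ∧ ¬ R.Adj v0 (emb i) := by
          intro i; have := hmem i; simp only [hB, Finset.mem_filter] at this; exact this.2
        rcases h2 (SimpleGraph.comap emb R) with ⟨t, htc, hc⟩ | ⟨t, htc, hc⟩
        · refine Or.inl ⟨t.image emb, ?_, ?_⟩
          · rw [Finset.card_image_of_injective _ hinj]; omega
          · rintro x hx y hy hxy
            simp only [Finset.mem_image] at hx hy
            obtain ⟨i, hi, rfl⟩ := hx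
            obtain ⟨j, hj, rfl⟩ := hy
            exact hc i hi j hj (fun h => hxy (by rw [h]))
        · refine Or.inr ⟨insert v0 (t.image emb), ?_, ?_⟩
          · have hnot : v0 ∉ t.image emb := by
              simp only [Finset.mem_image, not_exists]
              rintro x ⟨hx, hex⟩
              exact (hprop x).1 hex
            rw [Finset.card_insert_of_notMem hnot,
              Finset.card_image_of_injective _ hinj]
            omega
          · intro x hx y hy hxy
            simp only [Finset.mem_insert, Finset.mem_image] at hx hy
            rcases hx with rfl | ⟨i, hi, rfl⟩
            · rcases hy with rfl | ⟨j, hj, rfl⟩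
              · exact absurd rfl hxy
              · exact (hprop j).2
            · rcases hy with rfl | ⟨j, hj, rfl⟩
              · exact fun h => (hprop i).2 h.symm
              · exact hc i hi j hj (fun h => hxy (by rw [h]))

lemma ramseyProp_exists {VG VH : Type} [Fintype VG] [Fintype VH]
    (G : SimpleGraph VG) (H : SimpleGraph VH) : ∃ M, RamseyProp G H M := by
  obtain ⟨M, hM⟩ := ramsey_finset (Fintype.card VG + Fintype.card VH)
    (Fintype.card VG) (Fintype.card VH) le_rfl
  refine ⟨M, fun R => ?_⟩
  rcases hM R with ⟨t, htc, hc⟩ | ⟨t, htc, hc⟩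
  · left
    have : Fintype.card VG ≤ Fintype.card {x // x ∈ t} := by
      rwa [Fintype.card_coe]
    obtain ⟨g⟩ := Function.Embedding.nonempty_of_card_le this
    refine ⟨fun v => (g v : Fin M), fun u v huv => g.injective (Subtype.ext huv), ?_⟩
    intro u v huv
    exact hc _ (g u).2 _ (g v).2 (fun h => huv.ne (g.injective (Subtype.ext h)))
  · right
    have : Fintype.card VH ≤ Fintype.card {x // x ∈ t} := by
      rwa [Fintype.card_coe]
    obtain ⟨g⟩ := Function.Embedding.nonempty_of_card_le this
    refine ⟨fun v => (g v : Fin M), fun u v huv => g.injective (Subtype.ext huv), ?_⟩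
    intro u v huv
    have hne : (g u : Fin M) ≠ (g v : Fin M) :=
      fun h => huv.ne (g.injective (Subtype.ext h))
    exact ⟨hne, hc _ (g u).2 _ (g v).2 hne⟩


/-- Burr's lower bound: `R(G,H) ≥ (χ(H)−1)(n−1) + σ(H)` for connected `G` on `n > σ(H)` vertices. -/
theorem burr_lower_bound {VG VH : Type} [Fintype VG] [Fintype VH]
    (G : SimpleGraph VG) (H : SimpleGraph VH) (n : ℕ)
    (hG : G.Connected) (hn : Fintype.card VG = n) (hσ : sigmaH H < n) :
    (H.chromaticNumber.toNat - 1) * (n - 1) + sigmaH H ≤ ramseyNumber G H := by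
  classical
  set k := H.chromaticNumber.toNat with hk
  set s := sigmaH H with hs
  refine le_csInf ⟨_, (ramseyProp_exists G H).choose_spec⟩ ?_
  intro M hM
  by_contra hlt
  push_neg at hlt
  -- basic numerology
  have hn1 : 1 ≤ n := by omega
  have hn2 : 2 ≤ n := by
    by_contra h
    push_neg at h
    interval_cases n <;> simp_all <;> omega
  have hk1 : 1 ≤ k := by
    by_contra h
    push_neg at h
    have hk0 : k = 0 := by omega
    have hsempty : { t | ∃ C : H.Coloring (Fin H.chromaticNumber.toNat), ∃ i,
        t = Nat.card {v // C v = i} } = ∅ := by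
      ext t
      simp only [Set.mem_setOf_eq, Set.mem_empty_iff_false, iff_false, not_exists]
      intro C i
      rw [← hk, hk0] at i
      exact i.elim0
    have hs0 : s = 0 := by rw [hs, sigmaH, hsempty, Nat.sInf_empty]
    rw [hk0] at hlt
    simp only [Nat.zero_sub, Nat.zero_mul] at hlt
    omega
  have hd : 0 < n - 1 := by omega
  -- the counterexample colouring
  set R : SimpleGraph (Fin M) :=
    { Adj := fun i j => i ≠ j ∧ (i : ℕ) / (n-1) = (j : ℕ) / (n-1)
      symm := by constructor; rintro i j ⟨h1, h2⟩; exact ⟨h1.symm, h2.symm⟩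
      loopless := by constructor; intro i h; exact h.1 rfl } with hR
  rcases hM R with ⟨f, hfinj, hf⟩ | ⟨f, hfinj, hf⟩
  · -- red copy of G : impossible since components have < n vertices
    have hclass : ∀ u v : VG, (f u : ℕ) / (n-1) = (f v : ℕ) / (n-1) := by
      intro u v
      have hreach := (hG.preconnected u v)
      obtain ⟨p⟩ := hreach
      induction p with
      | nil => rfl
      | cons h p ih =>
        have h2 := (hf _ _ h).2
        exact h2.trans ih
    have : Nonempty VG := by
      rw [← Fintype.card_pos_iff, hn]; omega
    obtain ⟨v0⟩ := this
    set t := (f v0 : ℕ) / (n-1) with ht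
    have hinj2 : Function.Injective (fun v : VG => (⟨(f v : ℕ) % (n-1), Nat.mod_lt _ hd⟩ : Fin (n-1))) := by
      intro u v huv
      have h1 : (f u : ℕ) % (n-1) = (f v : ℕ) % (n-1) := congrArg Fin.val huv
      have h2 : (f u : ℕ) / (n-1) = (f v : ℕ) / (n-1) := hclass u v
      have : (f u : ℕ) = (f v : ℕ) := by
        rw [← Nat.div_add_mod (f u : ℕ) (n-1), ← Nat.div_add_mod (f v : ℕ) (n-1), h1, h2]
      exact hfinj (Fin.ext this)
    have hcard := Fintype.card_le_of_injective _ hinj2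
    rw [hn, Fintype.card_fin] at hcard
    omega
  · -- blue copy of H
    have hbound : ∀ v : VH, (f v : ℕ) / (n-1) < k := by
      intro v
      rw [Nat.div_lt_iff_lt_mul hd]
      have hmul : (k-1)*(n-1) = k*(n-1) - (n-1) := Nat.sub_one_mul k (n-1)
      have hle : (n-1) ≤ k*(n-1) := Nat.le_mul_of_pos_left _ (by omega)
      have hfv : (f v : ℕ) < M := (f v).2
      omega
    set C : VH → Fin k := fun v => ⟨(f v : ℕ) / (n-1), hbound v⟩ with hC
    have hCvalid : ∀ {u v : VH}, H.Adj u v → C u ≠ C v := by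
      intro u v huv hCuv
      have h2 := hf u v huv
      rw [compl_adj] at h2
      apply h2.2
      refine ⟨h2.1, ?_⟩
      exact congrArg Fin.val hCuv
    set Col : H.Coloring (Fin k) := SimpleGraph.Coloring.mk C (fun h => hCvalid h) with hCol
    set i0 : Fin k := ⟨k - 1, by omega⟩ with hi0
    have hmem : Nat.card {v // Col v = i0} ∈
        { t | ∃ C : H.Coloring (Fin H.chromaticNumber.toNat), ∃ i,
            t = Nat.card {v // C v = i} } := ⟨Col, i0, rfl⟩
    have hsle : s ≤ Nat.card {v // Col v = i0} := Nat.sInf_le hmem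
    -- any v in class i0 has f v ≥ (k-1)*(n-1)
    have hge : ∀ v : VH, Col v = i0 → (k-1) * (n-1) ≤ (f v : ℕ) := by
      intro v hv
      have : (f v : ℕ) / (n-1) = k - 1 := congrArg Fin.val hv
      rw [← Nat.le_div_iff_mul_le hd, this]
    set p := (k-1)*(n-1) with hp
    rcases le_or_gt p M with hpM | hpM
    · -- top class nonempty range: its size is < s
      set g : {v // Col v = i0} → Fin (M - p) := fun v => ⟨(f v.1 : ℕ) - p, by
        have h1 := hge v.1 v.2
        have h2 : (f v.1 : ℕ) < M := (f v.1).2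
        omega⟩ with hg
      have hginj : Function.Injective g := by
        intro u v huv
        have h1 : (f u.1 : ℕ) - p = (f v.1 : ℕ) - p := congrArg Fin.val huv
        have h2 := hge u.1 u.2
        have h3 := hge v.1 v.2
        have : (f u.1 : ℕ) = (f v.1 : ℕ) := by omega
        exact Subtype.ext (hfinj (Fin.ext this))
      have hcard := Nat.card_le_card_of_injective g hginj
      rw [Nat.card_eq_fintype_card (α := Fin (M - p)), Fintype.card_fin] at hcard
      omega
    · -- colour k-1 unused : contradiction with chromatic number
      have hnone : ∀ v : VH, Col v ≠ i0 := by
        intro v hv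
        have h1 := hge v hv
        have h2 : (f v : ℕ) < M := (f v).2
        omega
      have hcol : H.Colorable (k-1) := by
        refine ⟨SimpleGraph.Coloring.mk (fun v => (⟨(Col v : ℕ), by
            have h1 : (Col v : ℕ) < k := (Col v).2
            have h2 : (Col v : ℕ) ≠ k-1 := fun h => hnone v (Fin.ext h)
            omega⟩ : Fin (k-1))) ?_⟩
        intro u v huv hEq
        simp only [Fin.mk.injEq] at hEq
        exact Col.valid huv (Fin.ext hEq)
      have hle := hcol.chromaticNumber_le
      have hfin : k ≤ k - 1 := by
        have h2 := ENat.toNat_le_toNat hle (by simp)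
        rwa [ENat.toNat_coe, ← hk] at h2
      omega
end

section
/- For all natural numbers s and n with n ≥ s², any n-vertex graph which does not contain K_{s,s} as a subgraph has at most 2·n^{2 − 1/s} edges. -/
open SimpleGraph Finset

lemma kst_common_aux {V : Type} [Fintype V] [DecidableEq V] (G : SimpleGraph V)
    [DecidableRel G.Adj] {s : ℕ}
    (hKss : ¬ Embeds (completeBipartiteGraph (Fin s) (Fin s)) G)
    (S : Finset V) (hS : S.card = s) :
    (Finset.univ.filter fun v => ∀ u ∈ S, G.Adj u v).card ≤ s - 1 := by
  by_contra h
  push_neg at h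
  have hcard : s ≤ (Finset.univ.filter fun v => ∀ u ∈ S, G.Adj u v).card := by
    have hs0 : 0 < s := by
      by_contra hs0
      have : s = 0 := by omega
      subst this
      exact hKss ⟨Sum.elim (fun i => i.elim0) (fun i => i.elim0),
        Function.injective_of_subsingleton _,
        fun u v huv => by cases u with
          | inl i => exact i.elim0
          | inr i => exact i.elim0⟩
    omega
  obtain ⟨T, hTsub, hT⟩ := Finset.exists_subset_card_eq hcard
  have hadj : ∀ t ∈ T, ∀ u ∈ S, G.Adj u t := fun t ht u hu =>
    (Finset.mem_filter.mp (hTsub ht)).2 u hu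
  have hdisj : ∀ x, x ∈ S → x ∈ T → False := fun x hxS hxT =>
    G.irrefl (hadj x hxT x hxS)
  let eS : Fin s → V := fun i => (S.equivFin.symm (Fin.cast hS.symm i) : V)
  let eT : Fin s → V := fun i => (T.equivFin.symm (Fin.cast hT.symm i) : V)
  have hSm : ∀ i : Fin s, eS i ∈ S := fun i => (S.equivFin.symm (Fin.cast hS.symm i)).2
  have hTm : ∀ i : Fin s, eT i ∈ T := fun i => (T.equivFin.symm (Fin.cast hT.symm i)).2
  have heSinj : Function.Injective eS := by
    intro i j h
    have h2 := S.equivFin.symm.injective (Subtype.ext h)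
    simpa [Fin.ext_iff] using h2
  have heTinj : Function.Injective eT := by
    intro i j h
    have h2 := T.equivFin.symm.injective (Subtype.ext h)
    simpa [Fin.ext_iff] using h2
  apply hKss
  refine ⟨Sum.elim eS eT, ?_, ?_⟩
  · intro a b hab
    cases a with
    | inl i =>
      cases b with
      | inl j =>
        simp only [Sum.elim_inl] at hab
        exact congrArg Sum.inl (heSinj hab)
      | inr j =>
        simp only [Sum.elim_inl, Sum.elim_inr] at hab
        exact absurd hab (fun hab => hdisj _ (hSm i) (hab ▸ hTm j))
    | inr i =>
      cases b with
      | inl j =>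
        simp only [Sum.elim_inl, Sum.elim_inr] at hab
        exact absurd hab (fun hab => hdisj _ (hSm j) (hab ▸ hTm i))
      | inr j =>
        simp only [Sum.elim_inr] at hab
        exact congrArg Sum.inr (heTinj hab)
  · intro u v huv
    cases u with
    | inl i =>
      cases v with
      | inl j => simp [completeBipartiteGraph] at huv
      | inr j => exact hadj _ (hTm j) _ (hSm i)
    | inr i =>
      cases v with
      | inl j => exact (hadj _ (hTm i) _ (hSm j)).symm
      | inr j => simp [completeBipartiteGraph] at huv

lemma kst_sum_choose {V : Type} [Fintype V] [DecidableEq V] (G : SimpleGraph V)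
    [DecidableRel G.Adj] {s n : ℕ} (hn : Fintype.card V = n)
    (hbound : ∀ S : Finset V, S.card = s →
      (Finset.univ.filter fun v => ∀ u ∈ S, G.Adj u v).card ≤ s - 1) :
    ∑ v : V, (G.degree v).choose s ≤ (s - 1) * n.choose s := by
  classical
  have h1 : ∀ v : V, (G.degree v).choose s
      = ((Finset.univ.powersetCard s).filter (fun S => S ⊆ G.neighborFinset v)).card := by
    intro v
    rw [← G.card_neighborFinset_eq_degree, ← Finset.card_powersetCard]
    congr 1
    ext S
    simp only [Finset.mem_powersetCard, Finset.mem_filter, Finset.subset_univ, true_and]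
    tauto
  calc ∑ v : V, (G.degree v).choose s
      = ∑ v : V, ∑ S ∈ Finset.univ.powersetCard s,
          if S ⊆ G.neighborFinset v then 1 else 0 := by
        simp only [h1, Finset.card_filter]
    _ = ∑ S ∈ Finset.univ.powersetCard s, ∑ v : V,
          if S ⊆ G.neighborFinset v then 1 else 0 := Finset.sum_comm
    _ = ∑ S ∈ Finset.univ.powersetCard s,
          (Finset.univ.filter fun v => S ⊆ G.neighborFinset v).card := by
        simp only [Finset.card_filter]
    _ ≤ ∑ _S ∈ Finset.univ.powersetCard s, (s - 1) := by
        apply Finset.sum_le_sum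
        intro S hS
        have hScard : S.card = s := (Finset.mem_powersetCard.mp hS).2
        have heq : (Finset.univ.filter fun v => S ⊆ G.neighborFinset v)
            = (Finset.univ.filter fun v => ∀ u ∈ S, G.Adj u v) := by
          apply Finset.filter_congr
          intro v _
          rw [Finset.subset_iff]
          constructor
          · intro h u hu
            exact ((SimpleGraph.mem_neighborFinset _ _ _).mp (h hu)).symm
          · intro h u hu
            exact (SimpleGraph.mem_neighborFinset _ _ _).mpr (h u hu).symm
        rw [heq]
        exact hbound S hScard
    _ = (s - 1) * n.choose s := by
        rw [Finset.sum_const, smul_eq_mul, Finset.card_powersetCard, Finset.card_univ, hn,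
          mul_comm]

lemma kst_pointwise (d s : ℕ) : (d - (s - 1)) ^ s ≤ Nat.factorial s * d.choose s := by
  rw [← Nat.descFactorial_eq_factorial_mul_choose, Nat.descFactorial_eq_prod_range]
  calc (d - (s - 1)) ^ s = ∏ _i ∈ Finset.range s, (d - (s - 1)) := by
        rw [Finset.prod_const, Finset.card_range]
    _ ≤ ∏ i ∈ Finset.range s, (d - i) := by
        apply Finset.prod_le_prod (fun _ _ => Nat.zero_le _)
        intro i hi
        have : i ≤ s - 1 := by have := Finset.mem_range.mp hi; omega
        omega

lemma cast_nat_sub_ge (a b : ℕ) : (a : ℝ) - b ≤ ((a - b : ℕ) : ℝ) := by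
  rcases le_total b a with h | h
  · rw [Nat.cast_sub h]
  · have h0 : a - b = 0 := Nat.sub_eq_zero_of_le h
    rw [h0]
    have : (a : ℝ) ≤ b := by exact_mod_cast h
    simpa using this


/-- Kővári–Sós–Turán: an `n`-vertex `K_{s,s}`-free graph (with `n ≥ s²`)
has at most `2 n^{2 - 1/s}` edges. -/
theorem kst_count {V : Type} [Fintype V] (G : SimpleGraph V) [DecidableRel G.Adj]
    (s n : ℕ) (hn : Fintype.card V = n) (hns : s ^ 2 ≤ n)
    (hKss : ¬ Embeds (completeBipartiteGraph (Fin s) (Fin s)) G) :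
    (G.edgeFinset.card : ℝ) ≤ 2 * (n : ℝ) ^ ((2 : ℝ) - 1 / s) := by
  classical
  -- dispose of s = 0
  rcases Nat.eq_zero_or_pos s with rfl | hs0
  · exact absurd ⟨Sum.elim (fun i => i.elim0) (fun i => i.elim0),
      Function.injective_of_subsingleton _,
      fun u v huv => by cases u with
        | inl i => exact i.elim0
        | inr i => exact i.elim0⟩ hKss
  -- dispose of s = 1 : no edges
  rcases eq_or_lt_of_le (Nat.succ_le_of_lt hs0) with hs1 | hs2
  · have hs1 : s = 1 := hs1.symm
    subst hs1
    have hbot : ∀ u v : V, ¬ G.Adj u v := by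
      intro u v huv
      apply hKss
      refine ⟨Sum.elim (fun _ => u) (fun _ => v), ?_, ?_⟩
      · intro a b hab
        have hne : u ≠ v := G.ne_of_adj huv
        cases a with
        | inl i =>
          cases b with
          | inl j => exact congrArg Sum.inl (Subsingleton.elim i j)
          | inr j => exact absurd hab hne
        | inr i =>
          cases b with
          | inl j => exact absurd hab.symm hne
          | inr j => exact congrArg Sum.inr (Subsingleton.elim i j)
      · intro a b hab
        cases a with
        | inl i =>
          cases b with
          | inl j => simp [completeBipartiteGraph] at hab
          | inr j => exact huv
        | inr i =>
          cases b with
          | inl j => exact huv.symm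
          | inr j => simp [completeBipartiteGraph] at hab
    have hE : G.edgeFinset = ∅ := by
      rw [Finset.eq_empty_iff_forall_notMem]
      intro e he
      rw [SimpleGraph.mem_edgeFinset] at he
      induction e with
      | _ u v => exact hbot u v he
    rw [hE]
    simp only [Finset.card_empty, Nat.cast_zero]
    positivity
  -- now s ≥ 2
  have hs2 : 2 ≤ s := hs2
  have hn4 : 4 ≤ n := le_trans (by nlinarith) hns
  have hn0 : (0 : ℝ) < n := by
    have : 0 < n := by omega
    exact_mod_cast this
  have hn1 : (1 : ℝ) ≤ n := by
    have : 1 ≤ n := by omega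
    exact_mod_cast this
  have hsR : (2 : ℝ) ≤ s := by exact_mod_cast hs2
  have hsne : (s : ℝ) ≠ 0 := by positivity
  -- √n bound on s
  have hsqrt : (s : ℝ) ≤ (n : ℝ) ^ ((1 : ℝ) / 2) := by
    have h2 : ((s : ℝ) ^ 2) ≤ (n : ℝ) := by exact_mod_cast hns
    have h3 := Real.rpow_le_rpow (by positivity) h2 (by norm_num : (0:ℝ) ≤ 1/2)
    rwa [show ((s : ℝ) ^ 2) ^ ((1:ℝ)/2) = s by
      rw [← Real.rpow_natCast (s : ℝ) 2, ← Real.rpow_mul (by positivity)]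
      norm_num] at h3
  have hkey : (n : ℝ) * s ≤ (n : ℝ) ^ ((2 : ℝ) - 1 / s) := by
    have h32 : (n : ℝ) * s ≤ (n : ℝ) ^ ((3 : ℝ) / 2) := by
      calc (n : ℝ) * s ≤ (n : ℝ) * (n : ℝ) ^ ((1:ℝ)/2) :=
            mul_le_mul_of_nonneg_left hsqrt hn0.le
        _ = (n : ℝ) ^ ((3:ℝ)/2) := by
            nth_rewrite 1 [← Real.rpow_one (n : ℝ)]
            rw [← Real.rpow_add hn0]
            norm_num
    refine h32.trans (Real.rpow_le_rpow_of_exponent_le hn1 ?_)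
    have hinv : 1 / (s : ℝ) ≤ 1 / 2 := by
      apply one_div_le_one_div_of_le <;> linarith
    linarith
  -- the two cases
  by_cases hcase : 2 * G.edgeFinset.card ≤ n * s
  · -- few edges
    have h1 : 2 * (G.edgeFinset.card : ℝ) ≤ (n : ℝ) * s := by exact_mod_cast hcase
    have h2 : (0 : ℝ) ≤ (n : ℝ) ^ ((2:ℝ) - 1/s) := Real.rpow_nonneg hn0.le _
    linarith
  · push_neg at hcase
    -- ℕ inequality from double counting
    have hbound := fun S hS => kst_common_aux G hKss S hS
    have hsum1 := kst_sum_choose G hn hbound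
    have hNat : ∑ v : V, (G.degree v - (s - 1)) ^ s ≤ (s - 1) * n ^ s := by
      calc ∑ v : V, (G.degree v - (s - 1)) ^ s
          ≤ ∑ v : V, Nat.factorial s * (G.degree v).choose s :=
            Finset.sum_le_sum (fun v _ => kst_pointwise _ s)
        _ = Nat.factorial s * ∑ v : V, (G.degree v).choose s := by
            rw [Finset.mul_sum]
        _ ≤ Nat.factorial s * ((s - 1) * n.choose s) :=
            Nat.mul_le_mul_left _ hsum1
        _ = (s - 1) * (Nat.factorial s * n.choose s) := by ring
        _ = (s - 1) * n.descFactorial s := by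
            rw [Nat.descFactorial_eq_factorial_mul_choose]
        _ ≤ (s - 1) * n ^ s := Nat.mul_le_mul_left _ (Nat.descFactorial_le_pow n s)
    set X : ℝ := 2 * (G.edgeFinset.card : ℝ) - (n : ℝ) * ((s : ℝ) - 1) with hXdef
    have hns' : (n : ℝ) * s < 2 * (G.edgeFinset.card : ℝ) := by exact_mod_cast hcase
    have hXpos : 0 < X := by
      rw [hXdef]
      nlinarith
    -- lower bound the sum of truncated degrees
    have hdegsum : ∑ v : V, (G.degree v : ℝ) = 2 * (G.edgeFinset.card : ℝ) := by
      exact_mod_cast congrArg (Nat.cast : ℕ → ℝ) G.sum_degrees_eq_twice_card_edges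
    have ha : X ≤ ∑ v : V, ((G.degree v - (s - 1) : ℕ) : ℝ) := by
      have h1 : ∑ v : V, ((G.degree v : ℝ) - ((s - 1 : ℕ) : ℝ))
          ≤ ∑ v : V, ((G.degree v - (s - 1) : ℕ) : ℝ) :=
        Finset.sum_le_sum (fun v _ => cast_nat_sub_ge _ _)
      have h2 : ∑ v : V, ((G.degree v : ℝ) - ((s - 1 : ℕ) : ℝ))
          = 2 * (G.edgeFinset.card : ℝ) - (n : ℝ) * ((s : ℝ) - 1) := by
        rw [Finset.sum_sub_distrib, hdegsum, Finset.sum_const, Finset.card_univ, hn,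
          nsmul_eq_mul, Nat.cast_sub (by omega : 1 ≤ s)]
        push_cast
        ring
      rw [hXdef, ← h2]
      exact h1
    -- Jensen
    have hb : X ^ s ≤ (n : ℝ) ^ (s - 1) * ∑ v : V, ((G.degree v - (s - 1) : ℕ) : ℝ) ^ s := by
      have hcard : ((Finset.univ : Finset V).card : ℝ) = n := by rw [Finset.card_univ, hn]
      have hj := pow_sum_div_card_le_sum_pow
        (s := (Finset.univ : Finset V))
        (f := fun v => ((G.degree v - (s - 1) : ℕ) : ℝ))
        (fun i _ => by positivity) (s - 1)
      rw [show s - 1 + 1 = s by omega, hcard] at hj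
      have hXs : X ^ s ≤ (∑ v : V, ((G.degree v - (s - 1) : ℕ) : ℝ)) ^ s :=
        pow_le_pow_left₀ hXpos.le ha s
      have hnp : (0 : ℝ) < (n : ℝ) ^ (s - 1) := by positivity
      rw [div_le_iff₀ hnp] at hj
      calc X ^ s ≤ (∑ v : V, ((G.degree v - (s - 1) : ℕ) : ℝ)) ^ s := hXs
        _ ≤ (∑ v : V, ((G.degree v - (s - 1) : ℕ) : ℝ) ^ s) * (n : ℝ) ^ (s - 1) := hj
        _ = (n : ℝ) ^ (s - 1) * ∑ v : V, ((G.degree v - (s - 1) : ℕ) : ℝ) ^ s := mul_comm _ _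
    -- cast the ℕ bound
    have hc : ∑ v : V, ((G.degree v - (s - 1) : ℕ) : ℝ) ^ s ≤ ((s : ℝ) - 1) * (n : ℝ) ^ s := by
      have h1 : (((∑ v : V, (G.degree v - (s - 1)) ^ s : ℕ)) : ℝ)
          ≤ (((s - 1) * n ^ s : ℕ) : ℝ) := by exact_mod_cast hNat
      push_cast [Nat.cast_sub (by omega : 1 ≤ s)] at h1
      exact h1
    have hd : X ^ s ≤ ((s : ℝ) - 1) * (n : ℝ) ^ (2 * s - 1) := by
      calc X ^ s ≤ (n : ℝ) ^ (s - 1) * (((s : ℝ) - 1) * (n : ℝ) ^ s) := by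
            refine hb.trans (mul_le_mul_of_nonneg_left hc (by positivity))
        _ = ((s : ℝ) - 1) * (n : ℝ) ^ (2 * s - 1) := by
            rw [← mul_assoc, mul_comm ((n:ℝ) ^ (s-1)), mul_assoc, ← pow_add]
            congr 2
            omega
    -- take s-th root
    have hroot : X ≤ 2 * (n : ℝ) ^ ((2 : ℝ) - 1 / s) := by
      have h2 := Real.rpow_le_rpow (by positivity) hd (by positivity : (0:ℝ) ≤ 1 / s)
      rw [← Real.rpow_natCast X s, ← Real.rpow_mul hXpos.le, mul_one_div, div_self hsne,
        Real.rpow_one] at h2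
      rw [Real.mul_rpow (by linarith) (by positivity)] at h2
      have hnr : (((n : ℝ) ^ (2 * s - 1)) : ℝ) ^ ((1:ℝ) / s) = (n : ℝ) ^ ((2 : ℝ) - 1 / s) := by
        rw [← Real.rpow_natCast (n : ℝ) (2 * s - 1), ← Real.rpow_mul hn0.le]
        congr 1
        rw [Nat.cast_sub (by omega : 1 ≤ 2 * s)]
        push_cast
        field_simp
      have hs1b : ((s : ℝ) - 1) ^ ((1:ℝ) / s) ≤ 2 := by
        have h2s : ((s : ℝ) - 1) ≤ (2 : ℝ) ^ (s : ℕ) := by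
          have h3 : (s : ℝ) ≤ (2 : ℝ) ^ (s : ℕ) := by
            exact_mod_cast (Nat.lt_two_pow_self (n := s)).le
          linarith
        calc ((s : ℝ) - 1) ^ ((1:ℝ)/s)
            ≤ ((2 : ℝ) ^ (s : ℕ)) ^ ((1:ℝ)/s) :=
              Real.rpow_le_rpow (by linarith) h2s (by positivity)
          _ = 2 := by
              rw [← Real.rpow_natCast (2:ℝ) s, ← Real.rpow_mul (by norm_num),
                mul_one_div, div_self hsne, Real.rpow_one]
      rw [hnr] at h2
      calc X ≤ ((s : ℝ) - 1) ^ ((1:ℝ)/s) * (n : ℝ) ^ ((2:ℝ) - 1/s) := h2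
        _ ≤ 2 * (n : ℝ) ^ ((2:ℝ) - 1/s) :=
            mul_le_mul_of_nonneg_right hs1b (Real.rpow_nonneg hn0.le _)
    -- conclude
    have hfin : (n : ℝ) * ((s : ℝ) - 1) ≤ (n : ℝ) * s := by nlinarith
    have hrn : (0 : ℝ) ≤ (n : ℝ) ^ ((2:ℝ) - 1/s) := Real.rpow_nonneg hn0.le _
    rw [hXdef] at hroot
    linarith
end

section
/- Let G be a bipartite graph with parts X and Y which does not contain a copy of K_{s,s}. If p is a real number with 2·(s/|Y|)^{1/s} ≤ p ≤ 1, then at most 2s/p vertices in X have degree greater than p·|Y|. -/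
open SimpleGraph Finset

private lemma kst_cast_sub_le (m n : ℕ) : (m:ℝ) - n ≤ ((m - n : ℕ):ℝ) := by
  rcases le_total n m with h | h
  · rw [Nat.cast_sub h]
  · rw [Nat.sub_eq_zero_of_le h]
    have : (m:ℝ) ≤ n := Nat.cast_le.mpr h
    push_cast; linarith

private lemma kst_sum_card_filter_comm {α β : Type*} (A : Finset α) (B : Finset β)
    (r : α → β → Prop) [∀ a b, Decidable (r a b)] :
    ∑ b ∈ B, (A.filter fun a => r a b).card = ∑ a ∈ A, (B.filter fun b => r a b).card := by
  simp_rw [Finset.card_filter]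
  exact Finset.sum_comm

set_option maxHeartbeats 1000000 in
/-- Bipartite Kővári–Sós–Turán: in a `K_{s,s}`-free bipartite graph with parts `X, Y`,
for `2(s/|Y|)^{1/s} ≤ p ≤ 1`, at most `2s/p` vertices of `X` have degree greater
than `p|Y|`. -/
theorem kst_bipartite {V : Type} [Fintype V] [DecidableEq V]
    (G : SimpleGraph V) [DecidableRel G.Adj]
    (X Y : Finset V) (hdisj : Disjoint X Y)
    (hbip : ∀ u v, G.Adj u v → (u ∈ X ∧ v ∈ Y) ∨ (u ∈ Y ∧ v ∈ X))
    (s : ℕ) (p : ℝ)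
    (hKss : ¬ ∃ (S T : Finset V), S ⊆ X ∧ T ⊆ Y ∧ S.card = s ∧ T.card = s ∧
        ∀ u ∈ S, ∀ v ∈ T, G.Adj u v)
    (hp1 : 2 * ((s : ℝ) / Y.card) ^ ((1 : ℝ) / s) ≤ p) (hp2 : p ≤ 1) :
    ((X.filter fun x => p * Y.card < ((Y.filter fun y => G.Adj x y).card : ℝ)).card : ℝ)
      ≤ 2 * s / p := by
  classical
  rcases Nat.eq_zero_or_pos s with hs0 | hs
  · subst hs0
    exact absurd ⟨∅, ∅, by simp, by simp, by simp, by simp, by simp⟩ hKss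
  rcases Finset.eq_empty_or_nonempty Y with hY | hYne
  · have hp0 : 0 ≤ p := le_trans (by positivity) hp1
    subst hY
    simp only [Finset.filter_empty, Finset.card_empty, Nat.cast_zero, mul_zero]
    have : (X.filter fun _ : V => (0:ℝ) < (0:ℝ)) = ∅ := by simp
    rw [this]
    simp only [Finset.card_empty, Nat.cast_zero]
    exact div_nonneg (by positivity) hp0
  have hn : 0 < Y.card := Finset.card_pos.mpr hYne
  set n := Y.card with hndef
  have hs' : (0:ℝ) < s := by exact_mod_cast hs
  have hn' : (0:ℝ) < n := by exact_mod_cast hn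
  set W := X.filter fun x => p * (n:ℝ) < ((Y.filter fun y => G.Adj x y).card : ℝ) with hWdef
  set w := W.card with hwdef
  by_contra hcon
  push_neg at hcon
  have hp0 : 0 < p :=
    lt_of_lt_of_le (mul_pos two_pos (Real.rpow_pos_of_pos (div_pos hs' hn') _)) hp1
  have hwp : 2 * (s:ℝ) < (w:ℝ) * p := by
    rw [div_lt_iff₀ hp0] at hcon; linarith
  have hw1 : 0 < w := by
    rcases Nat.eq_zero_or_pos w with h | h
    · rw [h] at hwp
      norm_num at hwp
      linarith
    · exact h
  have hw' : (0:ℝ) < w := by exact_mod_cast hw1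
  -- key consequence of hp1
  have hsn : (s:ℝ) ≤ (n:ℝ) * (p/2)^s := by
    have hbase : (0:ℝ) ≤ (s:ℝ)/n := by positivity
    have h1 : ((s:ℝ)/n) ^ ((1:ℝ)/s) ≤ p/2 := by linarith
    have hse : ((s:ℕ):ℝ) ≠ 0 := ne_of_gt hs'
    have key : ((s:ℝ)/n) ≤ (p/2)^s := by
      calc ((s:ℝ)/n) = (((s:ℝ)/n) ^ ((1:ℝ)/s)) ^ (s:ℕ) := by
            rw [← Real.rpow_natCast (((s:ℝ)/n) ^ ((1:ℝ)/s)) s, ← Real.rpow_mul hbase,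
              one_div, inv_mul_cancel₀ hse, Real.rpow_one]
        _ ≤ (p/2)^(s:ℕ) := pow_le_pow_left₀ (Real.rpow_nonneg hbase _) h1 s
    rw [div_le_iff₀ hn'] at key
    linarith
  have hWX : W ⊆ X := Finset.filter_subset _ _
  set d : V → ℕ := fun y => (W.filter fun x => G.Adj x y).card with hddef
  -- counting lemma
  have hcount : ∀ S ∈ W.powersetCard s,
      ((Y.filter fun y => ∀ x ∈ S, G.Adj x y).card) ≤ s - 1 := by
    intro S hS
    rw [Finset.mem_powersetCard] at hS
    by_contra h
    push_neg at h
    have hsle : s ≤ (Y.filter fun y => ∀ x ∈ S, G.Adj x y).card := by omega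
    obtain ⟨T, hT, hTcard⟩ := Finset.exists_subset_card_eq hsle
    exact hKss ⟨S, T, hS.1.trans hWX, hT.trans (Finset.filter_subset _ _), hS.2, hTcard,
      fun u hu v hv => (Finset.mem_filter.mp (hT hv)).2 u hu⟩
  have hps : ∀ y : V, ((W.filter fun x => G.Adj x y).powersetCard s)
      = (W.powersetCard s).filter (fun S => ∀ x ∈ S, G.Adj x y) := by
    intro y
    ext S
    constructor
    · intro hS
      rw [Finset.mem_powersetCard] at hS
      refine Finset.mem_filter.mpr ⟨Finset.mem_powersetCard.mpr
        ⟨fun x hx => (Finset.mem_filter.mp (hS.1 hx)).1, hS.2⟩,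
        fun x hx => (Finset.mem_filter.mp (hS.1 hx)).2⟩
    · intro hS
      obtain ⟨h1, h2⟩ := Finset.mem_filter.mp hS
      rw [Finset.mem_powersetCard] at h1 ⊢
      exact ⟨fun x hx => Finset.mem_filter.mpr ⟨h1.1 hx, h2 x hx⟩, h1.2⟩
  have hdc : ∑ y ∈ Y, (d y).choose s ≤ (s-1) * w.choose s := by
    calc ∑ y ∈ Y, (d y).choose s
        = ∑ y ∈ Y, ((W.powersetCard s).filter fun S => ∀ x ∈ S, G.Adj x y).card := by
          refine Finset.sum_congr rfl fun y _ => ?_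
          rw [hddef]
          rw [← Finset.card_powersetCard, hps y]
      _ = ∑ S ∈ W.powersetCard s, (Y.filter fun y => ∀ x ∈ S, G.Adj x y).card :=
          kst_sum_card_filter_comm _ _ _
      _ ≤ ∑ _S ∈ W.powersetCard s, (s-1) := Finset.sum_le_sum hcount
      _ = (w.choose s) * (s-1) := by
          rw [Finset.sum_const, smul_eq_mul, Finset.card_powersetCard]
      _ = (s-1) * w.choose s := mul_comm _ _
  have hNat : ∑ y ∈ Y, (d y).descFactorial s ≤ (s-1) * w^s := by
    calc ∑ y ∈ Y, (d y).descFactorial s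
        = ∑ y ∈ Y, s.factorial * (d y).choose s := by
          simp_rw [Nat.descFactorial_eq_factorial_mul_choose]
      _ = s.factorial * ∑ y ∈ Y, (d y).choose s := (Finset.mul_sum _ _ _).symm
      _ ≤ s.factorial * ((s-1) * w.choose s) := Nat.mul_le_mul_left _ hdc
      _ = (s-1) * (s.factorial * w.choose s) := by ring
      _ = (s-1) * w.descFactorial s := by rw [Nat.descFactorial_eq_factorial_mul_choose]
      _ ≤ (s-1) * w^s := Nat.mul_le_mul_left _ (Nat.descFactorial_le_pow _ _)
  -- degree sum
  have hswap1 : ∑ y ∈ Y, d y = ∑ x ∈ W, (Y.filter fun y => G.Adj x y).card :=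
    kst_sum_card_filter_comm _ _ _
  have ht : (w:ℝ) * (p * n) < ∑ y ∈ Y, (d y : ℝ) := by
    have hWne : W.Nonempty := Finset.card_pos.mp hw1
    have h1 : ∑ x ∈ W, (p * (n:ℝ)) < ∑ x ∈ W, ((Y.filter fun y => G.Adj x y).card : ℝ) := by
      refine Finset.sum_lt_sum_of_nonempty hWne fun x hx => ?_
      exact (Finset.mem_filter.mp hx).2
    have h2 : ∑ x ∈ W, (p * (n:ℝ)) = (w:ℝ) * (p * n) := by
      rw [Finset.sum_const, nsmul_eq_mul]
    have h3 : ∑ y ∈ Y, (d y : ℝ) = ∑ x ∈ W, ((Y.filter fun y => G.Adj x y).card : ℝ) := by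
      rw [← Nat.cast_sum, hswap1, Nat.cast_sum]
    rw [h3]; rw [h2] at h1; exact h1
  -- Jensen
  set f : V → ℝ := fun y => ((d y + 1 - s : ℕ) : ℝ) with hfdef
  have hfnn : ∀ y ∈ Y, (0:ℝ) ≤ f y := fun y _ => Nat.cast_nonneg _
  have hjen := pow_sum_div_card_le_sum_pow hfnn (s - 1)
  rw [Nat.sub_add_cancel hs] at hjen
  -- lower bound on ∑ f
  have hf1 : ∀ y ∈ Y, (d y : ℝ) - ((s:ℝ)-1) ≤ f y := by
    intro y _
    have := kst_cast_sub_le (d y + 1) s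
    push_cast at this ⊢
    linarith
  have hsumf : (n:ℝ) * ((w:ℝ)*p - ((s:ℝ)-1)) < ∑ y ∈ Y, f y := by
    have e1 : ∑ y ∈ Y, ((d y:ℝ) - ((s:ℝ)-1)) = (∑ y ∈ Y, (d y:ℝ)) - (n:ℝ) * ((s:ℝ)-1) := by
      rw [Finset.sum_sub_distrib, Finset.sum_const, nsmul_eq_mul]
    have e2 : ∑ y ∈ Y, ((d y:ℝ) - ((s:ℝ)-1)) ≤ ∑ y ∈ Y, f y := Finset.sum_le_sum hf1
    have e3 : (n:ℝ) * ((w:ℝ)*p - ((s:ℝ)-1)) = (w:ℝ) * (p * (n:ℝ)) - (n:ℝ)*((s:ℝ)-1) := by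
      ring
    linarith
  -- upper bound on ∑ f^s
  have h3 : ∑ y ∈ Y, f y ^ s ≤ ∑ y ∈ Y, ((d y).descFactorial s : ℝ) := by
    refine Finset.sum_le_sum fun y _ => ?_
    have h := Nat.pow_sub_le_descFactorial (d y) s
    rw [hfdef]
    rw [← Nat.cast_pow]
    exact_mod_cast h
  have h4 : ∑ y ∈ Y, ((d y).descFactorial s : ℝ) ≤ ((s:ℝ)-1) * (w:ℝ)^s := by
    have : ((∑ y ∈ Y, (d y).descFactorial s : ℕ) : ℝ) ≤ (((s-1) * w^s : ℕ) : ℝ) :=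
      Nat.cast_le.mpr hNat
    push_cast [Nat.cast_sub hs] at this
    exact this
  -- combine
  have hA2 : (w:ℝ)*p/2 < (w:ℝ)*p - ((s:ℝ)-1) := by linarith
  have hApos : (0:ℝ) < (w:ℝ)*p/2 := by linarith
  have hnpow : (0:ℝ) < (n:ℝ)^(s-1) := pow_pos hn' _
  have hchain1 : ((n:ℝ)*((p/2)*(w:ℝ)))^s / (n:ℝ)^(s-1)
      < (∑ y ∈ Y, f y)^s / (n:ℝ)^(s-1) := by
    rw [div_lt_div_iff_of_pos_right hnpow]
    have hlt : (n:ℝ)*((p/2)*(w:ℝ)) < ∑ y ∈ Y, f y := by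
      have : (n:ℝ)*((p/2)*(w:ℝ)) < (n:ℝ) * ((w:ℝ)*p - ((s:ℝ)-1)) := by
        have := mul_lt_mul_of_pos_left hA2 hn'
        calc (n:ℝ)*((p/2)*(w:ℝ)) = (n:ℝ) * ((w:ℝ)*p/2) := by ring
          _ < (n:ℝ) * ((w:ℝ)*p - ((s:ℝ)-1)) := this
      linarith
    exact pow_lt_pow_left₀ hlt (mul_nonneg hn'.le (mul_nonneg (by linarith) hw'.le))
      (Nat.pos_iff_ne_zero.mp hs)
  have hlhs_eq : ((n:ℝ)*((p/2)*(w:ℝ)))^s / (n:ℝ)^(s-1) = (n:ℝ) * ((p/2)*(w:ℝ))^s := by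
    have hns : (n:ℝ)^s = (n:ℝ)^(s-1) * (n:ℝ) := by
      rw [← pow_succ, Nat.sub_add_cancel hs]
    rw [mul_pow, hns, mul_assoc]
    exact mul_div_cancel_left₀ _ hnpow.ne'
  have hchain3 : (s:ℝ) * (w:ℝ)^s ≤ (n:ℝ) * ((p/2)*(w:ℝ))^s := by
    have : (n:ℝ) * ((p/2)*(w:ℝ))^s = ((n:ℝ) * (p/2)^s) * (w:ℝ)^s := by
      rw [mul_pow]; ring
    rw [this]
    exact mul_le_mul_of_nonneg_right hsn (pow_nonneg hw'.le _)
  have hwpow : (0:ℝ) < (w:ℝ)^s := pow_pos hw' _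
  have hfinal : (s:ℝ) * (w:ℝ)^s < ((s:ℝ)-1) * (w:ℝ)^s := by
    calc (s:ℝ) * (w:ℝ)^s ≤ (n:ℝ) * ((p/2)*(w:ℝ))^s := hchain3
      _ = ((n:ℝ)*((p/2)*(w:ℝ)))^s / (n:ℝ)^(s-1) := hlhs_eq.symm
      _ < (∑ y ∈ Y, f y)^s / (n:ℝ)^(s-1) := hchain1
      _ ≤ ∑ y ∈ Y, f y ^ s := hjen
      _ ≤ ∑ y ∈ Y, ((d y).descFactorial s : ℝ) := h3
      _ ≤ ((s:ℝ)-1) * (w:ℝ)^s := h4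
  nlinarith [hwpow, hfinal]
end

section
/- Let Δ ≥ 1 be a natural number and 0 < ε < 1/(Δ²+4). Let F be an n-vertex graph in which every vertex has degree at least 3Δεn, and all but at most εn vertices have degree at least (1−2ε)n. Then F contains every n-vertex graph J with maximum degree at most Δ as a spanning subgraph. -/
open SimpleGraph Finset

set_option linter.unusedSectionVars false
set_option linter.unusedVariables false
set_option maxHeartbeats 1000000

namespace GenEmbedAux

variable {V W : Type} [Fintype V] [Fintype W] [DecidableEq V] [DecidableEq W]

section Defs

variable (n : ℕ) (ε : ℝ) (F : SimpleGraph V) [DecidableRel F.Adj]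
variable (J : SimpleGraph W) [DecidableRel J.Adj]

/-- The set of "bad" (low-degree) vertices of `F`. -/
noncomputable def BadV : Finset V := Finset.univ.filter (fun z => (F.degree z : ℝ) < (1 - 2*ε) * n)

/-- Non-neighbours of `z` (other than `z` itself). -/
def Xset (z : V) : Finset V := Finset.univ.filter (fun y => y ≠ z ∧ ¬ F.Adj z y)

variable {F J} in
/-- Conflicts at `p` under the bijection `φ`. -/
def ConfAt (φ : W ≃ V) (p : W) : Finset W :=
  Finset.univ.filter (fun q => J.Adj p q ∧ ¬ F.Adj (φ p) (φ q))

variable {F J} in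
/-- The set of conflicts (as ordered pairs). -/
def Conf (φ : W ≃ V) : Finset (W × W) :=
  Finset.univ.filter (fun e => J.Adj e.1 e.2 ∧ ¬ F.Adj (φ e.1) (φ e.2))

variable {F J} in
/-- Preimage under `φ` of the non-neighbours of `z`. -/
def PreX (φ : W ≃ V) (z : V) : Finset W :=
  Finset.univ.filter (fun w => φ w ≠ z ∧ ¬ F.Adj z (φ w))

/-- `p` is valid: neither it nor its `J`-neighbours sit on bad vertices. -/
def Vld (φ : W ≃ V) (p : W) : Prop :=
  φ p ∉ BadV n ε F ∧ ∀ q, J.Adj p q → φ q ∉ BadV n ε F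

/-- Invariant P : conflicts avoid the bad set. -/
def Pinv (φ : W ≃ V) : Prop :=
  ∀ p q : W, q ∈ ConfAt (J := J) (F := F) φ p → φ p ∉ BadV n ε F

/-- Invariant Q : every conflict has a valid endpoint. -/
def Qinv (φ : W ≃ V) : Prop :=
  ∀ p q : W, q ∈ ConfAt (J := J) (F := F) φ p → Vld n ε F J φ p ∨ Vld n ε F J φ q

end Defs

section Basic

variable {n : ℕ} {ε : ℝ} {F : SimpleGraph V} [DecidableRel F.Adj]
variable {J : SimpleGraph W} [DecidableRel J.Adj]
variable {φ : W ≃ V}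

lemma mem_ConfAt {p q : W} :
    q ∈ ConfAt (J := J) (F := F) φ p ↔ J.Adj p q ∧ ¬ F.Adj (φ p) (φ q) := by
  simp [ConfAt]

lemma ConfAt_symm {p q : W} (h : q ∈ ConfAt (J := J) (F := F) φ p) :
    p ∈ ConfAt (J := J) (F := F) φ q := by
  rw [mem_ConfAt] at h ⊢
  exact ⟨h.1.symm, fun hc => h.2 hc.symm⟩

lemma mem_Conf {e : W × W} :
    e ∈ Conf (J := J) (F := F) φ ↔ e.2 ∈ ConfAt (J := J) (F := F) φ e.1 := by
  simp [Conf, ConfAt]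

lemma ConfAt_subset_nbr {p : W} : ConfAt (J := J) (F := F) φ p ⊆ J.neighborFinset p := by
  intro q hq
  rw [mem_ConfAt] at hq
  simpa using hq.1

lemma mem_Xset {z y : V} : y ∈ Xset F z ↔ y ≠ z ∧ ¬ F.Adj z y := by simp [Xset]

lemma mem_PreX {z : V} {w : W} :
    w ∈ PreX (F := F) φ z ↔ φ w ≠ z ∧ ¬ F.Adj z (φ w) := by simp [PreX]

lemma card_PreX {z : V} : (PreX (F := F) φ z).card = (Xset F z).card := by
  apply Finset.card_bij (fun w _ => φ w)
  · intro w hw; rw [mem_PreX] at hw; rw [mem_Xset]; exact hw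
  · intro a _ b _ hab; exact φ.injective hab
  · intro y hy
    rw [mem_Xset] at hy
    exact ⟨φ.symm y, by rw [mem_PreX]; simpa using hy, by simp⟩

lemma card_Xset (hV : Fintype.card V = n) (z : V) :
    ((Xset F z).card : ℝ) = (n : ℝ) - 1 - F.degree z := by
  have h1 : Xset F z = (insert z (F.neighborFinset z))ᶜ := by
    ext y
    simp only [mem_Xset, Finset.mem_compl, Finset.mem_insert, SimpleGraph.mem_neighborFinset]
    tauto
  have h2 : z ∉ F.neighborFinset z := by simp
  have h3 : (insert z (F.neighborFinset z)).card = F.degree z + 1 := by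
    rw [Finset.card_insert_of_notMem h2, SimpleGraph.card_neighborFinset_eq_degree]
  have h4 : (Xset F z).card = Fintype.card V - (F.degree z + 1) := by
    rw [h1, Finset.card_compl, h3]
  have h5 : F.degree z + 1 ≤ Fintype.card V := by
    rw [← h3]
    exact Finset.card_le_univ _
  rw [h4]
  rw [hV] at h5 ⊢
  push_cast [Nat.cast_sub h5]
  ring

lemma good_deg {z : V} (hz : z ∉ BadV n ε F) : (1 - 2*ε) * n ≤ (F.degree z : ℝ) := by
  by_contra h
  exact hz (by simp [BadV]; linarith)

lemma card_Xset_good (hV : Fintype.card V = n) {z : V} (hz : z ∉ BadV n ε F) :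
    ((Xset F z).card : ℝ) ≤ 2*ε*n - 1 := by
  rw [card_Xset hV]
  have := good_deg hz
  linarith

lemma degJ_le {Δ : ℕ} (hJ : J.maxDegree ≤ Δ) (p : W) :
    (J.neighborFinset p).card ≤ Δ := by
  rw [SimpleGraph.card_neighborFinset_eq_degree]
  exact le_trans (SimpleGraph.degree_le_maxDegree J p) hJ

end Basic


section Swap

variable {n : ℕ} {ε : ℝ} {F : SimpleGraph V} [DecidableRel F.Adj]
variable {J : SimpleGraph W} [DecidableRel J.Adj]

lemma card_preimage (φ : W ≃ V) (s : Finset V) :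
    (Finset.univ.filter (fun w => φ w ∈ s)).card = s.card := by
  apply Finset.card_bij (fun w _ => φ w)
  · intro w hw; simpa using hw
  · intro a _ b _ hab; exact φ.injective hab
  · intro y hy; exact ⟨φ.symm y, by simpa using hy, by simp⟩

lemma exists_not_mem (hW : Fintype.card W = n) (E : Finset W) (h : (E.card : ℝ) < n) :
    ∃ w : W, w ∉ E := by
  by_contra h'
  push_neg at h'
  have : E = Finset.univ := Finset.eq_univ_iff_forall.2 h'
  rw [this, Finset.card_univ, hW] at h
  exact lt_irrefl _ h

lemma conf_after_swap (φ : W ≃ V) (v w v₁ : W)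
    (hconf : v₁ ∈ ConfAt (J := J) (F := F) φ v)
    (hwv : w ≠ v) (hwadj : ¬ J.Adj v w)
    (hC1 : ∀ x, J.Adj v x → (F.Adj (φ w) (φ x) ∨ (¬ F.Adj (φ v) (φ x) ∧ x ≠ v₁)))
    (hC2 : ∀ y, J.Adj w y → F.Adj (φ v) (φ y)) (p q : W)
    (hpq : q ∈ ConfAt (J := J) (F := F) ((Equiv.swap v w).trans φ) p) :
    q ∈ ConfAt (J := J) (F := F) φ p ∧ ¬(p = v ∧ q = v₁) ∧ ¬(p = v₁ ∧ q = v) := by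
  have hv₁v : v₁ ≠ v := by
    rw [mem_ConfAt] at hconf
    exact (J.ne_of_adj hconf.1).symm
  rw [mem_ConfAt] at hpq
  obtain ⟨hadj, hnadj⟩ := hpq
  simp only [Equiv.trans_apply] at hnadj
  by_cases hpv : p = v
  · subst hpv
    have hqp : q ≠ p := fun h => J.irrefl (h ▸ hadj)
    have hqw : q ≠ w := fun h => hwadj (h ▸ hadj)
    rw [Equiv.swap_apply_left, Equiv.swap_apply_of_ne_of_ne hqp hqw] at hnadj
    rcases hC1 q hadj with h1 | ⟨h1, h2⟩
    · exact absurd h1 hnadj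
    · exact ⟨mem_ConfAt.2 ⟨hadj, h1⟩, fun hh => h2 hh.2, fun hh => hv₁v hh.1.symm⟩
  · by_cases hpw : p = w
    · subst hpw
      have hqp : q ≠ p := fun h => J.irrefl (h ▸ hadj)
      have hqv : q ≠ v := fun h => hwadj (by rw [h] at hadj; exact hadj.symm)
      rw [Equiv.swap_apply_right, Equiv.swap_apply_of_ne_of_ne hqv hqp] at hnadj
      exact absurd (hC2 q hadj) hnadj
    · rw [Equiv.swap_apply_of_ne_of_ne hpv hpw] at hnadj
      by_cases hqv : q = v
      · subst hqv
        rw [Equiv.swap_apply_left] at hnadj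
        rcases hC1 p hadj.symm with h1 | ⟨h1, h2⟩
        · exact absurd h1.symm hnadj
        · refine ⟨mem_ConfAt.2 ⟨hadj, fun hc => h1 hc.symm⟩, fun hh => absurd hh.1 hpv, fun hh => absurd hh.1 h2⟩
      · by_cases hqw : q = w
        · subst hqw
          rw [Equiv.swap_apply_right] at hnadj
          exact absurd (hC2 p hadj.symm).symm hnadj
        · rw [Equiv.swap_apply_of_ne_of_ne hqv hqw] at hnadj
          exact ⟨mem_ConfAt.2 ⟨hadj, hnadj⟩, fun hh => absurd hh.1 hpv,
            fun hh => absurd hh.2 hqv⟩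

lemma card_conf_lt {φ φ' : W ≃ V} {v v₁ : W}
    (hconf : v₁ ∈ ConfAt (J := J) (F := F) φ v)
    (hsub : ∀ p q : W, q ∈ ConfAt (J := J) (F := F) φ' p →
      q ∈ ConfAt (J := J) (F := F) φ p ∧ ¬(p = v ∧ q = v₁)) :
    (Conf (J := J) (F := F) φ').card < (Conf (J := J) (F := F) φ).card := by
  have h1 : (v, v₁) ∈ Conf (J := J) (F := F) φ := mem_Conf.2 hconf
  have h2 : Conf (J := J) (F := F) φ' ⊆ (Conf (J := J) (F := F) φ).erase (v, v₁) := by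
    intro e he
    rw [mem_Conf] at he
    obtain ⟨he1, he2⟩ := hsub e.1 e.2 he
    rw [Finset.mem_erase]
    refine ⟨?_, mem_Conf.2 he1⟩
    intro h
    exact he2 ⟨congrArg Prod.fst h, congrArg Prod.snd h⟩
  calc (Conf (J := J) (F := F) φ').card ≤ _ := Finset.card_le_card h2
    _ < _ := Finset.card_erase_lt_of_mem h1

lemma exists_good_w (hV : Fintype.card V = n) (hW : Fintype.card W = n)
    {Δ : ℕ} (hJ : J.maxDegree ≤ Δ)
    (φ : W ≃ V) (v : W)
    (hvld : Vld n ε F J φ v)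
    (R : Finset W) (hR : R ⊆ J.neighborFinset v)
    (hcount : ((BadV n ε F).card : ℝ) + (1 + ((J.neighborFinset v).card : ℝ))
        + R.card * (2*ε*n - 1) + Δ * (2*ε*n - 1) < n) :
    ∃ w : W, φ w ∉ BadV n ε F ∧ w ≠ v ∧ ¬ J.Adj v w ∧
      (∀ x ∈ R, F.Adj (φ w) (φ x)) ∧ (∀ y, J.Adj w y → F.Adj (φ v) (φ y)) := by
  classical
  set E1 : Finset W := Finset.univ.filter (fun w => φ w ∈ BadV n ε F) with hE1
  set E2 : Finset W := insert v (J.neighborFinset v) with hE2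
  set E3 : Finset W := R.biUnion (fun x => PreX (F := F) φ (φ x)) with hE3
  set E4 : Finset W := (Xset F (φ v)).biUnion (fun z => J.neighborFinset (φ.symm z)) with hE4
  have hc1 : (E1.card : ℝ) = ((BadV n ε F).card : ℝ) := by
    rw [hE1, card_preimage]
  have hc2 : (E2.card : ℝ) ≤ 1 + ((J.neighborFinset v).card : ℝ) := by
    have := Finset.card_insert_le v (J.neighborFinset v)
    push_cast
    exact_mod_cast le_trans (Nat.cast_le.2 this) (by push_cast; linarith)
  have hc3 : (E3.card : ℝ) ≤ R.card * (2*ε*n - 1) := by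
    have h1 : E3.card ≤ ∑ x ∈ R, (PreX (F := F) φ (φ x)).card := Finset.card_biUnion_le
    have h2 : (∑ x ∈ R, ((PreX (F := F) φ (φ x)).card : ℝ)) ≤ ∑ _x ∈ R, (2*ε*n - 1) := by
      apply Finset.sum_le_sum
      intro x hx
      rw [card_PreX]
      apply card_Xset_good hV
      exact hvld.2 x (by simpa using hR hx)
    calc (E3.card : ℝ) ≤ ∑ x ∈ R, ((PreX (F := F) φ (φ x)).card : ℝ) := by exact_mod_cast h1
      _ ≤ ∑ _x ∈ R, (2*ε*n - 1) := h2
      _ = R.card * (2*ε*n - 1) := by rw [Finset.sum_const, nsmul_eq_mul]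
  have hc4 : (E4.card : ℝ) ≤ Δ * (2*ε*n - 1) := by
    have h1 : E4.card ≤ ∑ z ∈ Xset F (φ v), (J.neighborFinset (φ.symm z)).card :=
      Finset.card_biUnion_le
    have h2 : (∑ z ∈ Xset F (φ v), ((J.neighborFinset (φ.symm z)).card : ℝ)) ≤
        ∑ _z ∈ Xset F (φ v), (Δ : ℝ) := by
      apply Finset.sum_le_sum
      intro z _
      exact_mod_cast degJ_le hJ _
    have h3 : ((Xset F (φ v)).card : ℝ) ≤ 2*ε*n - 1 := card_Xset_good hV hvld.1
    calc (E4.card : ℝ) ≤ ∑ z ∈ Xset F (φ v), ((J.neighborFinset (φ.symm z)).card : ℝ) := by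
          exact_mod_cast h1
      _ ≤ ∑ _z ∈ Xset F (φ v), (Δ : ℝ) := h2
      _ = (Xset F (φ v)).card * Δ := by rw [Finset.sum_const, nsmul_eq_mul]
      _ ≤ (2*ε*n - 1) * Δ := by
          apply mul_le_mul_of_nonneg_right h3 (by positivity)
      _ = Δ * (2*ε*n - 1) := by ring
  have htot : (((E1 ∪ E2 ∪ E3 ∪ E4).card : ℕ) : ℝ) < n := by
    have h1 : (E1 ∪ E2 ∪ E3 ∪ E4).card ≤ E1.card + E2.card + E3.card + E4.card := by
      calc (E1 ∪ E2 ∪ E3 ∪ E4).card ≤ (E1 ∪ E2 ∪ E3).card + E4.card := Finset.card_union_le _ _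
        _ ≤ (E1 ∪ E2).card + E3.card + E4.card := by
            have := Finset.card_union_le (E1 ∪ E2) E3; omega
        _ ≤ E1.card + E2.card + E3.card + E4.card := by
            have := Finset.card_union_le E1 E2; omega
    calc (((E1 ∪ E2 ∪ E3 ∪ E4).card : ℕ) : ℝ) ≤
        (E1.card : ℝ) + E2.card + E3.card + E4.card := by exact_mod_cast h1
      _ < n := by rw [hc1] at *; linarith
  obtain ⟨w, hw⟩ := exists_not_mem hW _ htot
  simp only [Finset.mem_union, not_or] at hw
  obtain ⟨⟨⟨hw1, hw2⟩, hw3⟩, hw4⟩ := hw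
  have hwB : φ w ∉ BadV n ε F := by
    intro h; exact hw1 (by rw [hE1]; simp [h])
  have hwv : w ≠ v := by
    intro h; exact hw2 (by rw [hE2]; simp [h])
  have hwadj : ¬ J.Adj v w := by
    intro h; exact hw2 (by rw [hE2]; simp [h])
  refine ⟨w, hwB, hwv, hwadj, ?_, ?_⟩
  · intro x hx
    by_cases hfx : φ w = φ x
    · exact absurd (φ.injective hfx ▸ hwadj) (fun hc => hc (by simpa using hR hx))
    · by_contra hne
      apply hw3
      rw [hE3]
      rw [Finset.mem_biUnion]
      exact ⟨x, hx, mem_PreX.2 ⟨hfx, fun hc => hne hc.symm⟩⟩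
  · intro y hy
    by_contra hne
    by_cases hyv : φ y = φ v
    · have : y = v := φ.injective hyv
      subst this
      exact hwadj hy.symm
    · apply hw4
      rw [hE4, Finset.mem_biUnion]
      refine ⟨φ y, mem_Xset.2 ⟨hyv, hne⟩, ?_⟩
      have hss : φ.symm (φ y) = y := Equiv.symm_apply_apply _ _
      rw [hss, SimpleGraph.mem_neighborFinset]
      exact hy.symm

end Swap

section StepGood

variable {n : ℕ} {ε : ℝ} {F : SimpleGraph V} [DecidableRel F.Adj]
variable {J : SimpleGraph W} [DecidableRel J.Adj]

lemma memB_swap (φ : W ≃ V) {v w : W} (hv : φ v ∉ BadV n ε F) (hw : φ w ∉ BadV n ε F)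
    (p : W) : ((Equiv.swap v w).trans φ) p ∈ BadV n ε F ↔ φ p ∈ BadV n ε F := by
  simp only [Equiv.trans_apply]
  by_cases hpv : p = v
  · subst hpv; rw [Equiv.swap_apply_left]; exact ⟨fun h => absurd h hw, fun h => absurd h hv⟩
  · by_cases hpw : p = w
    · subst hpw; rw [Equiv.swap_apply_right]; exact ⟨fun h => absurd h hv, fun h => absurd h hw⟩
    · rw [Equiv.swap_apply_of_ne_of_ne hpv hpw]

lemma Vld_swap (φ : W ≃ V) {v w : W} (hv : φ v ∉ BadV n ε F) (hw : φ w ∉ BadV n ε F)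
    (p : W) (h : Vld n ε F J φ p) : Vld n ε F J ((Equiv.swap v w).trans φ) p := by
  refine ⟨(memB_swap φ hv hw p).not.2 h.1, fun q hq => (memB_swap φ hv hw q).not.2 (h.2 q hq)⟩

lemma stepGood (hV : Fintype.card V = n) (hW : Fintype.card W = n)
    {Δ : ℕ} (hJ : J.maxDegree ≤ Δ)
    (φ : W ≃ V) (hP : Pinv n ε F J φ) (hQ : Qinv n ε F J φ) (v v₁ : W)
    (hconf : v₁ ∈ ConfAt (J := J) (F := F) φ v)
    (hvld : Vld n ε F J φ v)
    (R : Finset W) (hR : R ⊆ J.neighborFinset v) (hv₁R : v₁ ∈ R)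
    (hRC : ∀ x, J.Adj v x → x ∉ R → (¬ F.Adj (φ v) (φ x) ∧ x ≠ v₁))
    (hcount : ((BadV n ε F).card : ℝ) + (1 + ((J.neighborFinset v).card : ℝ))
        + R.card * (2*ε*n - 1) + Δ * (2*ε*n - 1) < n) :
    ∃ φ' : W ≃ V, Pinv n ε F J φ' ∧ Qinv n ε F J φ' ∧
      (Conf (J := J) (F := F) φ').card < (Conf (J := J) (F := F) φ).card := by
  obtain ⟨w, hwB, hwv, hwadj, hwR, hwC2⟩ := exists_good_w hV hW hJ φ v hvld R hR hcount
  set φ' := (Equiv.swap v w).trans φ with hφ'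
  have hC1 : ∀ x, J.Adj v x → (F.Adj (φ w) (φ x) ∨ (¬ F.Adj (φ v) (φ x) ∧ x ≠ v₁)) := by
    intro x hx
    by_cases hxR : x ∈ R
    · exact Or.inl (hwR x hxR)
    · exact Or.inr (hRC x hx hxR)
  have hsub := conf_after_swap (J := J) (F := F) φ v w v₁ hconf hwv hwadj hC1 hwC2
  refine ⟨φ', ?_, ?_, card_conf_lt hconf (fun p q h => ⟨(hsub p q h).1, (hsub p q h).2.1⟩)⟩
  · intro p q hq
    obtain ⟨hold, -, -⟩ := hsub p q hq
    exact (memB_swap φ hvld.1 hwB p).not.2 (hP p q hold)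
  · intro p q hq
    obtain ⟨hold, -, -⟩ := hsub p q hq
    rcases hQ p q hold with h | h
    · exact Or.inl (Vld_swap φ hvld.1 hwB p h)
    · exact Or.inr (Vld_swap φ hvld.1 hwB q h)

end StepGood

section StepBad

variable {n : ℕ} {ε : ℝ} {F : SimpleGraph V} [DecidableRel F.Adj]
variable {J : SimpleGraph W} [DecidableRel J.Adj]

lemma exists_any_w (hV : Fintype.card V = n) (hW : Fintype.card W = n)
    {Δ : ℕ} (hJ : J.maxDegree ≤ Δ)
    (φ : W ≃ V) (v : W)
    (hvld : Vld n ε F J φ v)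
    (hcount : (1 + ((J.neighborFinset v).card : ℝ))
        + (J.neighborFinset v).card * (2*ε*n - 1) + Δ * (2*ε*n - 1) < n) :
    ∃ w : W, w ≠ v ∧ ¬ J.Adj v w ∧
      (∀ x ∈ J.neighborFinset v, F.Adj (φ w) (φ x)) ∧
      (∀ y, J.Adj w y → F.Adj (φ v) (φ y)) := by
  classical
  set R := J.neighborFinset v with hRdef
  set E2 : Finset W := insert v (J.neighborFinset v) with hE2
  set E3 : Finset W := R.biUnion (fun x => PreX (F := F) φ (φ x)) with hE3
  set E4 : Finset W := (Xset F (φ v)).biUnion (fun z => J.neighborFinset (φ.symm z)) with hE4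
  have hc2 : (E2.card : ℝ) ≤ 1 + ((J.neighborFinset v).card : ℝ) := by
    have := Finset.card_insert_le v (J.neighborFinset v)
    exact_mod_cast le_trans (Nat.cast_le.2 this) (by push_cast; linarith)
  have hc3 : (E3.card : ℝ) ≤ R.card * (2*ε*n - 1) := by
    have h1 : E3.card ≤ ∑ x ∈ R, (PreX (F := F) φ (φ x)).card := Finset.card_biUnion_le
    have h2 : (∑ x ∈ R, ((PreX (F := F) φ (φ x)).card : ℝ)) ≤ ∑ _x ∈ R, (2*ε*n - 1) := by
      apply Finset.sum_le_sum
      intro x hx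
      rw [card_PreX]
      apply card_Xset_good hV
      exact hvld.2 x (by simpa [hRdef] using hx)
    calc (E3.card : ℝ) ≤ ∑ x ∈ R, ((PreX (F := F) φ (φ x)).card : ℝ) := by exact_mod_cast h1
      _ ≤ ∑ _x ∈ R, (2*ε*n - 1) := h2
      _ = R.card * (2*ε*n - 1) := by rw [Finset.sum_const, nsmul_eq_mul]
  have hc4 : (E4.card : ℝ) ≤ Δ * (2*ε*n - 1) := by
    have h1 : E4.card ≤ ∑ z ∈ Xset F (φ v), (J.neighborFinset (φ.symm z)).card :=
      Finset.card_biUnion_le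
    have h2 : (∑ z ∈ Xset F (φ v), ((J.neighborFinset (φ.symm z)).card : ℝ)) ≤
        ∑ _z ∈ Xset F (φ v), (Δ : ℝ) := by
      apply Finset.sum_le_sum
      intro z _
      exact_mod_cast degJ_le hJ _
    have h3 : ((Xset F (φ v)).card : ℝ) ≤ 2*ε*n - 1 := card_Xset_good hV hvld.1
    calc (E4.card : ℝ) ≤ ∑ z ∈ Xset F (φ v), ((J.neighborFinset (φ.symm z)).card : ℝ) := by
          exact_mod_cast h1
      _ ≤ ∑ _z ∈ Xset F (φ v), (Δ : ℝ) := h2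
      _ = (Xset F (φ v)).card * Δ := by rw [Finset.sum_const, nsmul_eq_mul]
      _ ≤ (2*ε*n - 1) * Δ := mul_le_mul_of_nonneg_right h3 (by positivity)
      _ = Δ * (2*ε*n - 1) := by ring
  have htot : (((E2 ∪ E3 ∪ E4).card : ℕ) : ℝ) < n := by
    have h1 : (E2 ∪ E3 ∪ E4).card ≤ E2.card + E3.card + E4.card := by
      calc (E2 ∪ E3 ∪ E4).card ≤ (E2 ∪ E3).card + E4.card := Finset.card_union_le _ _
        _ ≤ E2.card + E3.card + E4.card := by
            have := Finset.card_union_le E2 E3; omega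
    calc (((E2 ∪ E3 ∪ E4).card : ℕ) : ℝ) ≤ (E2.card : ℝ) + E3.card + E4.card := by
          exact_mod_cast h1
      _ < n := by linarith
  obtain ⟨w, hw⟩ := exists_not_mem hW _ htot
  simp only [Finset.mem_union, not_or] at hw
  obtain ⟨⟨hw2, hw3⟩, hw4⟩ := hw
  have hwv : w ≠ v := by
    intro h; exact hw2 (by rw [hE2]; simp [h])
  have hwadj : ¬ J.Adj v w := by
    intro h; exact hw2 (by rw [hE2]; simp [h])
  refine ⟨w, hwv, hwadj, ?_, ?_⟩
  · intro x hx
    by_cases hfx : φ w = φ x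
    · exfalso
      have hwx : w = x := φ.injective hfx
      apply hwadj
      rw [hwx]
      simpa [hRdef] using hx
    · by_contra hne
      apply hw3
      rw [hE3, Finset.mem_biUnion]
      exact ⟨x, hx, mem_PreX.2 ⟨hfx, fun hc => hne hc.symm⟩⟩
  · intro y hy
    by_contra hne
    by_cases hyv : φ y = φ v
    · have : y = v := φ.injective hyv
      subst this
      exact hwadj hy.symm
    · apply hw4
      rw [hE4, Finset.mem_biUnion]
      refine ⟨φ y, mem_Xset.2 ⟨hyv, hne⟩, ?_⟩
      have hss : φ.symm (φ y) = y := Equiv.symm_apply_apply _ _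
      rw [hss, SimpleGraph.mem_neighborFinset]
      exact hy.symm

lemma stepBad (hV : Fintype.card V = n) (hW : Fintype.card W = n)
    {Δ : ℕ} (hJ : J.maxDegree ≤ Δ)
    (φ : W ≃ V) (hP : Pinv n ε F J φ) (hQ : Qinv n ε F J φ) (v v₁ : W)
    (hconf : v₁ ∈ ConfAt (J := J) (F := F) φ v)
    (hvld : Vld n ε F J φ v)
    (hBcond : ∀ a b : W, b ∈ ConfAt (J := J) (F := F) φ a →
      ¬(a = v ∧ b = v₁) → ¬(a = v₁ ∧ b = v) →
      (a = v ∨ J.Adj v a ∨ b = v ∨ J.Adj v b) →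
      ∃ r, (r = a ∨ r = b) ∧ Vld n ε F J φ r ∧ r ≠ v ∧ ¬ J.Adj v r)
    (hcount : (1 + ((J.neighborFinset v).card : ℝ))
        + (J.neighborFinset v).card * (2*ε*n - 1) + Δ * (2*ε*n - 1) < n) :
    ∃ φ' : W ≃ V, Pinv n ε F J φ' ∧ Qinv n ε F J φ' ∧
      (Conf (J := J) (F := F) φ').card < (Conf (J := J) (F := F) φ).card := by
  obtain ⟨w, hwv, hwadj, hwR, hwC2⟩ := exists_any_w hV hW hJ φ v hvld hcount
  set φ' := (Equiv.swap v w).trans φ with hφ'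
  have hC1full : ∀ x, J.Adj v x → F.Adj (φ w) (φ x) := by
    intro x hx
    exact hwR x (by simpa using hx)
  have hsub := conf_after_swap (J := J) (F := F) φ v w v₁ hconf hwv hwadj
    (fun x hx => Or.inl (hC1full x hx)) hwC2
  -- no conflicts at v after the swap
  have hnov : ∀ q, q ∉ ConfAt (J := J) (F := F) φ' v := by
    intro q hq
    rw [mem_ConfAt] at hq
    obtain ⟨hadj, hnadj⟩ := hq
    have hqv : q ≠ v := fun h => J.irrefl (h ▸ hadj)
    have hqw : q ≠ w := fun h => hwadj (h ▸ hadj)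
    apply hnadj
    simp only [hφ', Equiv.trans_apply, Equiv.swap_apply_left,
      Equiv.swap_apply_of_ne_of_ne hqv hqw]
    exact hC1full q hadj
  have happ : ∀ r : W, r ≠ v → r ≠ w → φ' r = φ r := by
    intro r h1 h2
    simp only [hφ', Equiv.trans_apply, Equiv.swap_apply_of_ne_of_ne h1 h2]
  have happw : φ' w = φ v := by
    simp [hφ', Equiv.trans_apply]
  have hVld' : ∀ r, Vld n ε F J φ r → r ≠ v → ¬ J.Adj v r → Vld n ε F J φ' r := by
    intro r hr hrv hradj
    constructor
    · by_cases hrw : r = w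
      · subst hrw; rw [happw]; exact hvld.1
      · rw [happ r hrv hrw]; exact hr.1
    · intro q' hq'
      by_cases hq'v : q' = v
      · exact absurd (hq'v ▸ hq').symm hradj
      · by_cases hq'w : q' = w
        · subst hq'w; rw [happw]; exact hvld.1
        · rw [happ q' hq'v hq'w]; exact hr.2 q' hq'
  refine ⟨φ', ?_, ?_, card_conf_lt hconf (fun p q h => ⟨(hsub p q h).1, (hsub p q h).2.1⟩)⟩
  · -- Pinv
    intro p q hq
    have hold := (hsub p q hq).1
    by_cases hpv : p = v
    · exact absurd hq (hpv ▸ hnov q)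
    · by_cases hpw : p = w
      · subst hpw; rw [happw]; exact hvld.1
      · rw [happ p hpv hpw]; exact hP p q hold
  · -- Qinv
    intro p q hq
    obtain ⟨hold, hne1, hne2⟩ := hsub p q hq
    have hpv : p ≠ v := fun h => hnov q (h ▸ hq)
    have hqv : q ≠ v := fun h => hnov p (h ▸ ConfAt_symm hq)
    have hget : ∃ r, (r = p ∨ r = q) ∧ Vld n ε F J φ r ∧ r ≠ v ∧ ¬ J.Adj v r := by
      by_cases htouch : p = v ∨ J.Adj v p ∨ q = v ∨ J.Adj v q
      · exact hBcond p q hold hne1 hne2 htouch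
      · push_neg at htouch
        obtain ⟨h1, h2, h3, h4⟩ := htouch
        rcases hQ p q hold with h | h
        · exact ⟨p, Or.inl rfl, h, h1, h2⟩
        · exact ⟨q, Or.inr rfl, h, h3, h4⟩
    obtain ⟨r, hr, hrV, hrv, hradj⟩ := hget
    rcases hr with h | h
    · exact Or.inl (h ▸ hVld' r hrV hrv hradj)
    · exact Or.inr (h ▸ hVld' r hrV hrv hradj)

end StepBad

section Swap2

variable {n : ℕ} {ε : ℝ} {F : SimpleGraph V} [DecidableRel F.Adj]
variable {J : SimpleGraph W} [DecidableRel J.Adj]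

lemma conf_after_swap2 (φ : W ≃ V) (v x w w' : W)
    (hvx : J.Adj v x)
    (hfine : F.Adj (φ v) (φ x))
    (hwv : w ≠ v) (hwx : w ≠ x) (hww' : w ≠ w')
    (hw'v : w' ≠ v) (hw'x : w' ≠ x)
    (hwadjv : ¬ J.Adj v w) (hwadjx : ¬ J.Adj x w)
    (hw'adjv : ¬ J.Adj v w') (hw'adjx : ¬ J.Adj x w')
    (ha : ∀ p, J.Adj v p → p ≠ x → F.Adj (φ w) (φ p))
    (hb : F.Adj (φ w) (φ w'))
    (hc : ∀ p, J.Adj x p → p ≠ v → F.Adj (φ w') (φ p))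
    (hd : ∀ y, J.Adj w y → F.Adj (φ v) (φ y))
    (he : ∀ y, J.Adj w' y → F.Adj (φ x) (φ y)) :
    ∀ p q : W, q ∈ ConfAt (J := J) (F := F)
        ((Equiv.swap x w').trans ((Equiv.swap v w).trans φ)) p →
      q ∈ ConfAt (J := J) (F := F) φ p ∧
        p ≠ v ∧ p ≠ x ∧ p ≠ w ∧ p ≠ w' ∧ q ≠ v ∧ q ≠ x ∧ q ≠ w ∧ q ≠ w' := by
  set φ'' := (Equiv.swap x w').trans ((Equiv.swap v w).trans φ) with hφ''
  have hvne : v ≠ x := J.ne_of_adj hvx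
  have happ : ∀ r : W, r ≠ v → r ≠ x → r ≠ w → r ≠ w' → φ'' r = φ r := by
    intro r h1 h2 h3 h4
    simp only [hφ'', Equiv.trans_apply, Equiv.swap_apply_of_ne_of_ne h2 h4,
      Equiv.swap_apply_of_ne_of_ne h1 h3]
  have happv : φ'' v = φ w := by
    simp only [hφ'', Equiv.trans_apply, Equiv.swap_apply_of_ne_of_ne hvne (Ne.symm hw'v),
      Equiv.swap_apply_left]
  have happx : φ'' x = φ w' := by
    simp only [hφ'', Equiv.trans_apply, Equiv.swap_apply_left,
      Equiv.swap_apply_of_ne_of_ne hw'v (Ne.symm hww')]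
  have happw : φ'' w = φ v := by
    simp only [hφ'', Equiv.trans_apply, Equiv.swap_apply_of_ne_of_ne hwx hww',
      Equiv.swap_apply_right]
  have happw' : φ'' w' = φ x := by
    simp only [hφ'', Equiv.trans_apply, Equiv.swap_apply_right,
      Equiv.swap_apply_of_ne_of_ne (Ne.symm hvne) (Ne.symm hwx)]
  -- no conflicts at the moved vertices
  have hnov : ∀ q, q ∉ ConfAt (J := J) (F := F) φ'' v := by
    intro q hq
    rw [mem_ConfAt] at hq
    obtain ⟨hadj, hnadj⟩ := hq
    apply hnadj
    have hqv : q ≠ v := fun hh => J.irrefl (hh ▸ hadj)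
    by_cases hqx : q = x
    · rw [happv, hqx, happx]; exact hb
    · by_cases hqw : q = w
      · exact absurd (hqw ▸ hadj) hwadjv
      · by_cases hqw' : q = w'
        · exact absurd (hqw' ▸ hadj) hw'adjv
        · rw [happv, happ q hqv hqx hqw hqw']; exact ha q hadj hqx
  have hnox : ∀ q, q ∉ ConfAt (J := J) (F := F) φ'' x := by
    intro q hq
    rw [mem_ConfAt] at hq
    obtain ⟨hadj, hnadj⟩ := hq
    apply hnadj
    have hqx : q ≠ x := fun hh => J.irrefl (hh ▸ hadj)
    by_cases hqv : q = v
    · rw [happx, hqv, happv]; exact hb.symm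
    · by_cases hqw : q = w
      · exact absurd (hqw ▸ hadj) hwadjx
      · by_cases hqw' : q = w'
        · exact absurd (hqw' ▸ hadj) hw'adjx
        · rw [happx, happ q hqv hqx hqw hqw']; exact hc q hadj hqv
  have hnow : ∀ q, q ∉ ConfAt (J := J) (F := F) φ'' w := by
    intro q hq
    rw [mem_ConfAt] at hq
    obtain ⟨hadj, hnadj⟩ := hq
    apply hnadj
    have hqw : q ≠ w := fun hh => J.irrefl (hh ▸ hadj)
    by_cases hqv : q = v
    · exact absurd (hqv ▸ hadj).symm hwadjv
    · by_cases hqx : q = x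
      · exact absurd (hqx ▸ hadj).symm hwadjx
      · by_cases hqw' : q = w'
        · rw [happw, hqw', happw']; exact hfine
        · rw [happw, happ q hqv hqx hqw hqw']; exact hd q hadj
  have hnow' : ∀ q, q ∉ ConfAt (J := J) (F := F) φ'' w' := by
    intro q hq
    rw [mem_ConfAt] at hq
    obtain ⟨hadj, hnadj⟩ := hq
    apply hnadj
    have hqw' : q ≠ w' := fun hh => J.irrefl (hh ▸ hadj)
    by_cases hqv : q = v
    · exact absurd (hqv ▸ hadj).symm hw'adjv
    · by_cases hqx : q = x
      · exact absurd (hqx ▸ hadj).symm hw'adjx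
      · by_cases hqw : q = w
        · rw [happw', hqw, happw]; exact hfine.symm
        · rw [happw', happ q hqv hqx hqw hqw']; exact he q hadj
  have hnomoved : ∀ r q : W,
      (r = v ∨ r = x ∨ r = w ∨ r = w') → q ∉ ConfAt (J := J) (F := F) φ'' r := by
    intro r q hr
    rcases hr with h | h | h | h
    · exact h ▸ hnov q
    · exact h ▸ hnox q
    · exact h ▸ hnow q
    · exact h ▸ hnow' q
  intro p q hpq
  have hp : ¬ (p = v ∨ p = x ∨ p = w ∨ p = w') := fun h => hnomoved p q h hpq
  have hq : ¬ (q = v ∨ q = x ∨ q = w ∨ q = w') := fun h => hnomoved q p h (ConfAt_symm hpq)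
  push_neg at hp hq
  obtain ⟨hp1, hp2, hp3, hp4⟩ := hp
  obtain ⟨hq1, hq2, hq3, hq4⟩ := hq
  rw [mem_ConfAt] at hpq
  rw [happ p hp1 hp2 hp3 hp4, happ q hq1 hq2 hq3 hq4] at hpq
  exact ⟨mem_ConfAt.2 hpq, hp1, hp2, hp3, hp4, hq1, hq2, hq3, hq4⟩

end Swap2

section M3Exists

variable {n : ℕ} {ε : ℝ} {F : SimpleGraph V} [DecidableRel F.Adj]
variable {J : SimpleGraph W} [DecidableRel J.Adj]

lemma exists_M3_w' (hV : Fintype.card V = n) (hW : Fintype.card W = n)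
    {Δ : ℕ} (hJ : J.maxDegree ≤ Δ)
    (φ : W ≃ V) (v v₁ x y' : W)
    (hvldx : Vld n ε F J φ x)
    (hNv : J.neighborFinset v = {v₁, x})
    (hNx : J.neighborFinset x = {v, y'})
    (hxy' : J.Adj x y')
    (hcount : ((BadV n ε F).card : ℝ) + 4 + (2*ε*n - 1) + Δ * (2*ε*n - 1) < n) :
    ∃ w' : W, φ w' ∉ BadV n ε F ∧
      w' ≠ v ∧ w' ≠ v₁ ∧ w' ≠ x ∧ w' ≠ y' ∧ ¬ J.Adj v w' ∧ ¬ J.Adj x w' ∧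
      (∀ p, J.Adj x p → p ≠ v → F.Adj (φ w') (φ p)) ∧
      (∀ y, J.Adj w' y → F.Adj (φ x) (φ y)) := by
  classical
  set E1 : Finset W := Finset.univ.filter (fun w => φ w ∈ BadV n ε F) with hE1
  set E2 : Finset W := {v, v₁, x, y'} with hE2
  set E3 : Finset W := PreX (F := F) φ (φ y') with hE3
  set E4 : Finset W := (Xset F (φ x)).biUnion (fun z => J.neighborFinset (φ.symm z)) with hE4
  have hc1 : (E1.card : ℝ) = ((BadV n ε F).card : ℝ) := by rw [hE1, card_preimage]
  have hc2 : (E2.card : ℝ) ≤ 4 := by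
    have : E2.card ≤ 4 := by
      rw [hE2]
      apply le_trans (Finset.card_insert_le _ _)
      have : ({v₁, x, y'} : Finset W).card ≤ 3 := by
        apply le_trans (Finset.card_insert_le _ _)
        apply Nat.succ_le_succ
        apply le_trans (Finset.card_insert_le _ _)
        simp
      omega
    exact_mod_cast this
  have hc3 : (E3.card : ℝ) ≤ 2*ε*n - 1 := by
    rw [hE3, card_PreX]
    exact card_Xset_good hV (hvldx.2 y' hxy')
  have hc4 : (E4.card : ℝ) ≤ Δ * (2*ε*n - 1) := by
    have h1 : E4.card ≤ ∑ z ∈ Xset F (φ x), (J.neighborFinset (φ.symm z)).card :=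
      Finset.card_biUnion_le
    have h2 : (∑ z ∈ Xset F (φ x), ((J.neighborFinset (φ.symm z)).card : ℝ)) ≤
        ∑ _z ∈ Xset F (φ x), (Δ : ℝ) := by
      apply Finset.sum_le_sum
      intro z _
      exact_mod_cast degJ_le hJ _
    have h3 : ((Xset F (φ x)).card : ℝ) ≤ 2*ε*n - 1 := card_Xset_good hV hvldx.1
    calc (E4.card : ℝ) ≤ ∑ z ∈ Xset F (φ x), ((J.neighborFinset (φ.symm z)).card : ℝ) := by
          exact_mod_cast h1
      _ ≤ ∑ _z ∈ Xset F (φ x), (Δ : ℝ) := h2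
      _ = (Xset F (φ x)).card * Δ := by rw [Finset.sum_const, nsmul_eq_mul]
      _ ≤ (2*ε*n - 1) * Δ := mul_le_mul_of_nonneg_right h3 (by positivity)
      _ = Δ * (2*ε*n - 1) := by ring
  have htot : (((E1 ∪ E2 ∪ E3 ∪ E4).card : ℕ) : ℝ) < n := by
    have h1 : (E1 ∪ E2 ∪ E3 ∪ E4).card ≤ E1.card + E2.card + E3.card + E4.card := by
      calc (E1 ∪ E2 ∪ E3 ∪ E4).card ≤ (E1 ∪ E2 ∪ E3).card + E4.card := Finset.card_union_le _ _
        _ ≤ (E1 ∪ E2).card + E3.card + E4.card := by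
            have := Finset.card_union_le (E1 ∪ E2) E3; omega
        _ ≤ E1.card + E2.card + E3.card + E4.card := by
            have := Finset.card_union_le E1 E2; omega
    calc (((E1 ∪ E2 ∪ E3 ∪ E4).card : ℕ) : ℝ) ≤
        (E1.card : ℝ) + E2.card + E3.card + E4.card := by exact_mod_cast h1
      _ < n := by rw [hc1]; linarith
  obtain ⟨w', hw'⟩ := exists_not_mem hW _ htot
  simp only [Finset.mem_union, not_or] at hw'
  obtain ⟨⟨⟨hw1, hw2⟩, hw3⟩, hw4⟩ := hw'
  have hE2mem : w' ≠ v ∧ w' ≠ v₁ ∧ w' ≠ x ∧ w' ≠ y' := by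
    constructor
    · intro h; exact hw2 (by rw [hE2]; simp [h])
    constructor
    · intro h; exact hw2 (by rw [hE2]; simp [h])
    constructor
    · intro h; exact hw2 (by rw [hE2]; simp [h])
    · intro h; exact hw2 (by rw [hE2]; simp [h])
  obtain ⟨hne1, hne2, hne3, hne4⟩ := hE2mem
  have hnadjv : ¬ J.Adj v w' := by
    intro h
    have : w' ∈ J.neighborFinset v := by simpa using h
    rw [hNv] at this
    simp only [Finset.mem_insert, Finset.mem_singleton] at this
    rcases this with h' | h'
    · exact hne2 h'
    · exact hne3 h'
  have hnadjx : ¬ J.Adj x w' := by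
    intro h
    have : w' ∈ J.neighborFinset x := by simpa using h
    rw [hNx] at this
    simp only [Finset.mem_insert, Finset.mem_singleton] at this
    rcases this with h' | h'
    · exact hne1 h'
    · exact hne4 h'
  refine ⟨w', ?_, hne1, hne2, hne3, hne4, hnadjv, hnadjx, ?_, ?_⟩
  · intro h; exact hw1 (by rw [hE1]; simp [h])
  · intro p hp hpv
    have hpmem : p ∈ J.neighborFinset x := by simpa using hp
    rw [hNx] at hpmem
    simp only [Finset.mem_insert, Finset.mem_singleton] at hpmem
    rcases hpmem with h' | h'
    · exact absurd h' hpv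
    · subst h'
      by_cases hfx : φ w' = φ p
      · exact absurd (φ.injective hfx) hne4
      · by_contra hne
        exact hw3 (by rw [hE3]; exact mem_PreX.2 ⟨hfx, fun hc => hne hc.symm⟩)
  · intro y hy
    by_contra hne
    by_cases hyx : φ y = φ x
    · have : y = x := φ.injective hyx
      subst this
      exact hnadjx hy.symm
    · apply hw4
      rw [hE4, Finset.mem_biUnion]
      refine ⟨φ y, mem_Xset.2 ⟨hyx, hne⟩, ?_⟩
      have hss : φ.symm (φ y) = y := Equiv.symm_apply_apply _ _
      rw [hss, SimpleGraph.mem_neighborFinset]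
      exact hy.symm

lemma exists_M3_w (hV : Fintype.card V = n) (hW : Fintype.card W = n)
    {Δ : ℕ} (hJ : J.maxDegree ≤ Δ)
    (φ : W ≃ V) (v v₁ x y' w' : W)
    (hconf : v₁ ∈ ConfAt (J := J) (F := F) φ v)
    (hvld : Vld n ε F J φ v)
    (hv₁B : φ v₁ ∉ BadV n ε F)
    (hw'B : φ w' ∉ BadV n ε F)
    (hNv : J.neighborFinset v = {v₁, x})
    (hNx : J.neighborFinset x = {v, y'})
    (hcount : (1 - 2*ε)*n > 5 + (2*ε*n - 2) + (Δ * (2*ε*n - 2) + ((Δ : ℝ) - 1))) :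
    ∃ w : W, F.Adj (φ w') (φ w) ∧
      w ≠ v ∧ w ≠ v₁ ∧ w ≠ x ∧ w ≠ y' ∧ w ≠ w' ∧ ¬ J.Adj v w ∧ ¬ J.Adj x w ∧
      (∀ p, J.Adj v p → p ≠ x → F.Adj (φ w) (φ p)) ∧
      (∀ y, J.Adj w y → F.Adj (φ v) (φ y)) := by
  classical
  have hadjv₁ : J.Adj v v₁ := (mem_ConfAt.1 hconf).1
  have hnadjc : ¬ F.Adj (φ v) (φ v₁) := (mem_ConfAt.1 hconf).2
  have hv₁v : v₁ ≠ v := (J.ne_of_adj hadjv₁).symm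
  set Bse : Finset W := Finset.univ.filter (fun w => φ w ∈ F.neighborFinset (φ w')) with hBse
  set E2 : Finset W := {v, v₁, x, y', w'} with hE2
  set E3 : Finset W := (PreX (F := F) φ (φ v₁)).erase v with hE3
  set E4 : Finset W := ((Xset F (φ v)).erase (φ v₁)).biUnion
      (fun z => J.neighborFinset (φ.symm z)) ∪ ((J.neighborFinset v₁).erase v) with hE4
  have hBsecard : ((1 - 2*ε)*n : ℝ) ≤ (Bse.card : ℝ) := by
    rw [hBse, card_preimage]
    rw [SimpleGraph.card_neighborFinset_eq_degree]
    exact good_deg hw'B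
  have hc2 : (E2.card : ℝ) ≤ 5 := by
    have : E2.card ≤ 5 := by
      rw [hE2]
      apply le_trans (Finset.card_insert_le _ _)
      have h3 : ({v₁, x, y', w'} : Finset W).card ≤ 4 := by
        apply le_trans (Finset.card_insert_le _ _)
        apply Nat.succ_le_succ
        apply le_trans (Finset.card_insert_le _ _)
        apply Nat.succ_le_succ
        apply le_trans (Finset.card_insert_le _ _)
        simp
      omega
    exact_mod_cast this
  have hvmemPre : v ∈ PreX (F := F) φ (φ v₁) := by
    rw [mem_PreX]
    exact ⟨fun hc => hv₁v (φ.injective hc).symm, fun hc => hnadjc hc.symm⟩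
  have hc3 : (E3.card : ℝ) ≤ 2*ε*n - 2 := by
    rw [hE3, Finset.card_erase_of_mem hvmemPre]
    have h1 : (PreX (F := F) φ (φ v₁)).card = (Xset F (φ v₁)).card := card_PreX
    have h2 : ((Xset F (φ v₁)).card : ℝ) ≤ 2*ε*n - 1 := card_Xset_good hV hv₁B
    have h3 : 1 ≤ (PreX (F := F) φ (φ v₁)).card := Finset.card_pos.2 ⟨v, hvmemPre⟩
    rw [Nat.cast_sub h3, h1]
    push_cast
    linarith
  have hv₁memX : φ v₁ ∈ Xset F (φ v) := by
    rw [mem_Xset]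
    exact ⟨fun hc => hv₁v (φ.injective hc), hnadjc⟩
  have hvmemN : v ∈ J.neighborFinset v₁ := by simpa using hadjv₁.symm
  have hc4 : (E4.card : ℝ) ≤ Δ * (2*ε*n - 2) + ((Δ : ℝ) - 1) := by
    have hpart1 : (((Xset F (φ v)).erase (φ v₁)).biUnion
        (fun z => J.neighborFinset (φ.symm z))).card ≤
        ∑ z ∈ (Xset F (φ v)).erase (φ v₁), (J.neighborFinset (φ.symm z)).card :=
      Finset.card_biUnion_le
    have hpart1' : ((((Xset F (φ v)).erase (φ v₁)).biUnion
        (fun z => J.neighborFinset (φ.symm z))).card : ℝ) ≤ Δ * (2*ε*n - 2) := by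
      have h2 : (∑ z ∈ (Xset F (φ v)).erase (φ v₁), ((J.neighborFinset (φ.symm z)).card : ℝ)) ≤
          ∑ _z ∈ (Xset F (φ v)).erase (φ v₁), (Δ : ℝ) := by
        apply Finset.sum_le_sum
        intro z _
        exact_mod_cast degJ_le hJ _
      have h3 : (((Xset F (φ v)).erase (φ v₁)).card : ℝ) ≤ 2*ε*n - 2 := by
        rw [Finset.card_erase_of_mem hv₁memX]
        have h4 : ((Xset F (φ v)).card : ℝ) ≤ 2*ε*n - 1 := card_Xset_good hV hvld.1
        have h5 : 1 ≤ (Xset F (φ v)).card := Finset.card_pos.2 ⟨φ v₁, hv₁memX⟩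
        rw [Nat.cast_sub h5]
        push_cast
        linarith
      calc ((((Xset F (φ v)).erase (φ v₁)).biUnion
          (fun z => J.neighborFinset (φ.symm z))).card : ℝ)
          ≤ ∑ z ∈ (Xset F (φ v)).erase (φ v₁), ((J.neighborFinset (φ.symm z)).card : ℝ) := by
            exact_mod_cast hpart1
        _ ≤ ∑ _z ∈ (Xset F (φ v)).erase (φ v₁), (Δ : ℝ) := h2
        _ = ((Xset F (φ v)).erase (φ v₁)).card * Δ := by rw [Finset.sum_const, nsmul_eq_mul]
        _ ≤ (2*ε*n - 2) * Δ := by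
            apply mul_le_mul_of_nonneg_right h3 (by positivity)
        _ = Δ * (2*ε*n - 2) := by ring
    have hpart2 : (((J.neighborFinset v₁).erase v).card : ℝ) ≤ (Δ : ℝ) - 1 := by
      rw [Finset.card_erase_of_mem hvmemN]
      have h1 : (J.neighborFinset v₁).card ≤ Δ := degJ_le hJ _
      have h2 : 1 ≤ (J.neighborFinset v₁).card := Finset.card_pos.2 ⟨v, hvmemN⟩
      rw [Nat.cast_sub h2]
      push_cast
      have : ((J.neighborFinset v₁).card : ℝ) ≤ Δ := by exact_mod_cast h1
      linarith
    calc (E4.card : ℝ) ≤ ((((Xset F (φ v)).erase (φ v₁)).biUnion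
          (fun z => J.neighborFinset (φ.symm z))).card : ℝ) +
          (((J.neighborFinset v₁).erase v).card : ℝ) := by
          rw [hE4]; exact_mod_cast Finset.card_union_le _ _
      _ ≤ Δ * (2*ε*n - 2) + ((Δ : ℝ) - 1) := by linarith
  -- the candidate set is nonempty
  have hEcard : ((E2 ∪ E3 ∪ E4).card : ℝ) < (Bse.card : ℝ) := by
    have h1 : (E2 ∪ E3 ∪ E4).card ≤ E2.card + E3.card + E4.card := by
      calc (E2 ∪ E3 ∪ E4).card ≤ (E2 ∪ E3).card + E4.card := Finset.card_union_le _ _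
        _ ≤ E2.card + E3.card + E4.card := by
            have := Finset.card_union_le E2 E3; omega
    have h2 : ((E2 ∪ E3 ∪ E4).card : ℝ) ≤ (E2.card : ℝ) + E3.card + E4.card := by
      exact_mod_cast h1
    linarith
  have hnonempty : (Bse \ (E2 ∪ E3 ∪ E4)).Nonempty := by
    rw [Finset.sdiff_nonempty]
    intro hsub
    have := Finset.card_le_card hsub
    have : (Bse.card : ℝ) ≤ ((E2 ∪ E3 ∪ E4).card : ℝ) := by exact_mod_cast this
    linarith
  obtain ⟨w, hw⟩ := hnonempty
  rw [Finset.mem_sdiff] at hw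
  obtain ⟨hwB, hwE⟩ := hw
  simp only [Finset.mem_union, not_or] at hwE
  obtain ⟨⟨hw2, hw3⟩, hw4⟩ := hwE
  have hwadj' : F.Adj (φ w') (φ w) := by
    rw [hBse] at hwB
    simpa using hwB
  have hne : w ≠ v ∧ w ≠ v₁ ∧ w ≠ x ∧ w ≠ y' ∧ w ≠ w' := by
    refine ⟨?_, ?_, ?_, ?_, ?_⟩ <;>
      · intro h; exact hw2 (by rw [hE2]; simp [h])
  obtain ⟨hne1, hne2, hne3, hne4, hne5⟩ := hne
  have hnadjv : ¬ J.Adj v w := by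
    intro h
    have : w ∈ J.neighborFinset v := by simpa using h
    rw [hNv] at this
    simp only [Finset.mem_insert, Finset.mem_singleton] at this
    rcases this with h' | h'
    · exact hne2 h'
    · exact hne3 h'
  have hnadjx : ¬ J.Adj x w := by
    intro h
    have : w ∈ J.neighborFinset x := by simpa using h
    rw [hNx] at this
    simp only [Finset.mem_insert, Finset.mem_singleton] at this
    rcases this with h' | h'
    · exact hne1 h'
    · exact hne4 h'
  refine ⟨w, hwadj', hne1, hne2, hne3, hne4, hne5, hnadjv, hnadjx, ?_, ?_⟩
  · intro p hp hpx
    have hpmem : p ∈ J.neighborFinset v := by simpa using hp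
    rw [hNv] at hpmem
    simp only [Finset.mem_insert, Finset.mem_singleton] at hpmem
    rcases hpmem with h' | h'
    · subst h'
      by_cases hfx : φ w = φ p
      · exact absurd (φ.injective hfx) hne2
      · by_contra hneg
        apply hw3
        rw [hE3, Finset.mem_erase]
        exact ⟨hne1, mem_PreX.2 ⟨hfx, fun hc => hneg hc.symm⟩⟩
    · exact absurd h' hpx
  · intro y hy
    by_contra hneg
    by_cases hyv : φ y = φ v
    · have : y = v := φ.injective hyv
      subst this
      exact hnadjv hy.symm
    · apply hw4
      rw [hE4, Finset.mem_union]
      by_cases hyv₁ : y = v₁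
      · right
        rw [Finset.mem_erase]
        subst hyv₁
        exact ⟨hne1, by simpa using hy.symm⟩
      · left
        rw [Finset.mem_biUnion]
        refine ⟨φ y, ?_, ?_⟩
        · rw [Finset.mem_erase]
          exact ⟨fun hc => hyv₁ (φ.injective hc), mem_Xset.2 ⟨hyv, hneg⟩⟩
        · have hss : φ.symm (φ y) = y := Equiv.symm_apply_apply _ _
          rw [hss, SimpleGraph.mem_neighborFinset]
          exact hy.symm

end M3Exists

section StepM3

variable {n : ℕ} {ε : ℝ} {F : SimpleGraph V} [DecidableRel F.Adj]
variable {J : SimpleGraph W} [DecidableRel J.Adj]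

lemma stepM3 (hV : Fintype.card V = n) (hW : Fintype.card W = n)
    {Δ : ℕ} (hJ : J.maxDegree ≤ Δ) (hΔ2 : Δ = 2)
    (φ : W ≃ V) (hP : Pinv n ε F J φ) (hQ : Qinv n ε F J φ) (v v₁ x y' : W)
    (hconf : v₁ ∈ ConfAt (J := J) (F := F) φ v)
    (hvld : Vld n ε F J φ v)
    (hvx : J.Adj v x) (hxv₁ : x ≠ v₁) (hvldx : Vld n ε F J φ x)
    (hxy' : y' ∈ ConfAt (J := J) (F := F) φ x)
    (hsingle_v : ∀ q ∈ ConfAt (J := J) (F := F) φ v, q = v₁)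
    (hHsingle : ∀ p, Vld n ε F J φ p → ∀ q ∈ ConfAt (J := J) (F := F) φ p,
      ∀ q' ∈ ConfAt (J := J) (F := F) φ p, q = q')
    (hb : ((BadV n ε F).card : ℝ) ≤ ε*n) (hβ : 1 ≤ ε*n) (hn8 : 8*(ε*n) < n) :
    ∃ φ' : W ≃ V, Pinv n ε F J φ' ∧ Qinv n ε F J φ' ∧
      (Conf (J := J) (F := F) φ').card < (Conf (J := J) (F := F) φ).card := by
  have hvv₁adj : J.Adj v v₁ := (mem_ConfAt.1 hconf).1
  have hxy'adj : J.Adj x y' := (mem_ConfAt.1 hxy').1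
  have hy'v : y' ≠ v := by
    intro h
    exact hxv₁ (hsingle_v x (ConfAt_symm (h ▸ hxy')))
  have hfine_vx : F.Adj (φ v) (φ x) := by
    by_contra hc
    exact hxv₁ (hsingle_v x (mem_ConfAt.2 ⟨hvx, hc⟩))
  have hvne : v ≠ x := J.ne_of_adj hvx
  have hNv : J.neighborFinset v = {v₁, x} := by
    have hsub : ({v₁, x} : Finset W) ⊆ J.neighborFinset v := by
      intro a ha
      simp only [Finset.mem_insert, Finset.mem_singleton] at ha
      rcases ha with h | h
      · subst h; simpa using hvv₁adj
      · subst h; simpa using hvx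
    have hcard2 : ({v₁, x} : Finset W).card = 2 := by
      rw [Finset.card_insert_of_notMem (by simp [Ne.symm hxv₁]), Finset.card_singleton]
    have hle : (J.neighborFinset v).card ≤ 2 := hΔ2 ▸ degJ_le hJ v
    exact (Finset.eq_of_subset_of_card_le hsub (by omega)).symm
  have hNx : J.neighborFinset x = {v, y'} := by
    have hsub : ({v, y'} : Finset W) ⊆ J.neighborFinset x := by
      intro a ha
      simp only [Finset.mem_insert, Finset.mem_singleton] at ha
      rcases ha with h | h
      · subst h; simpa using hvx.symm
      · subst h; simpa using hxy'adj
    have hcard2 : ({v, y'} : Finset W).card = 2 := by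
      rw [Finset.card_insert_of_notMem (by simp [Ne.symm hy'v]), Finset.card_singleton]
    have hle : (J.neighborFinset x).card ≤ 2 := hΔ2 ▸ degJ_le hJ x
    exact (Finset.eq_of_subset_of_card_le hsub (by omega)).symm
  have hv₁B : φ v₁ ∉ BadV n ε F := hP v₁ v (ConfAt_symm hconf)
  have hcount' : ((BadV n ε F).card : ℝ) + 4 + (2*ε*n - 1) + Δ * (2*ε*n - 1) < n := by
    rw [hΔ2]
    push_cast
    nlinarith
  obtain ⟨w', hw'B, hw'v, hw'v₁, hw'x, hw'y', hw'adjv, hw'adjx, hcC, heC⟩ :=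
    exists_M3_w' hV hW hJ φ v v₁ x y' hvldx hNv hNx hxy'adj hcount'
  have hcount : (1 - 2*ε)*n > 5 + (2*ε*n - 2) + (Δ * (2*ε*n - 2) + ((Δ : ℝ) - 1)) := by
    rw [hΔ2]
    push_cast
    nlinarith
  obtain ⟨w, hwadj', hwv, hwv₁, hwx, hwy', hww', hwadjv, hwadjx, haC, hdC⟩ :=
    exists_M3_w hV hW hJ φ v v₁ x y' w' hconf hvld hv₁B hw'B hNv hNx hcount
  set φ'' := (Equiv.swap x w').trans ((Equiv.swap v w).trans φ) with hφ''
  have hsub := conf_after_swap2 (J := J) (F := F) φ v x w w' hvx hfine_vx hwv hwx hww'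
    hw'v hw'x hwadjv hwadjx hw'adjv hw'adjx haC hwadj'.symm hcC hdC heC
  have happ : ∀ r : W, r ≠ v → r ≠ x → r ≠ w → r ≠ w' → φ'' r = φ r := by
    intro r h1 h2 h3 h4
    simp only [hφ'', Equiv.trans_apply, Equiv.swap_apply_of_ne_of_ne h2 h4,
      Equiv.swap_apply_of_ne_of_ne h1 h3]
  have happx : φ'' x = φ w' := by
    simp only [hφ'', Equiv.trans_apply, Equiv.swap_apply_left,
      Equiv.swap_apply_of_ne_of_ne hw'v (Ne.symm hww')]
  have happw : φ'' w = φ v := by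
    simp only [hφ'', Equiv.trans_apply, Equiv.swap_apply_of_ne_of_ne hwx hww',
      Equiv.swap_apply_right]
  have happw' : φ'' w' = φ x := by
    simp only [hφ'', Equiv.trans_apply, Equiv.swap_apply_right,
      Equiv.swap_apply_of_ne_of_ne (Ne.symm hvne) (Ne.symm hwx)]
  have hVld'' : ∀ r, Vld n ε F J φ r → r ≠ v → r ≠ x → r ≠ w → r ≠ w' →
      ¬ J.Adj v r → Vld n ε F J φ'' r := by
    intro r hr h1 h2 h3 h4 hradj
    constructor
    · rw [happ r h1 h2 h3 h4]; exact hr.1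
    · intro q' hq'
      by_cases hq'v : q' = v
      · exact absurd (hq'v ▸ hq').symm hradj
      · by_cases hq'x : q' = x
        · subst hq'x; rw [happx]; exact hw'B
        · by_cases hq'w : q' = w
          · subst hq'w; rw [happw]; exact hvld.1
          · by_cases hq'w' : q' = w'
            · subst hq'w'; rw [happw']; exact hvldx.1
            · rw [happ q' hq'v hq'x hq'w hq'w']; exact hr.2 q' hq'
  have hok : ∀ r s, s ∈ ConfAt (J := J) (F := F) φ r → r ≠ v → r ≠ x → r ≠ w → r ≠ w' →
      s ≠ v → Vld n ε F J φ r → Vld n ε F J φ'' r := by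
    intro r s hs h1 h2 h3 h4 hsv hr
    by_cases hradj : J.Adj v r
    · exfalso
      have hrmem : r ∈ J.neighborFinset v := by simpa using hradj
      rw [hNv] at hrmem
      simp only [Finset.mem_insert, Finset.mem_singleton] at hrmem
      rcases hrmem with h | h
      · subst h
        exact hsv (hHsingle r hr s hs v (ConfAt_symm hconf))
      · exact h2 h
    · exact hVld'' r hr h1 h2 h3 h4 hradj
  refine ⟨φ'', ?_, ?_, card_conf_lt hconf
    (fun p q h => ⟨(hsub p q h).1, fun hh => (hsub p q h).2.1 hh.1⟩)⟩
  · intro p q hq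
    obtain ⟨hold, hp1, hp2, hp3, hp4, hq1, hq2, hq3, hq4⟩ := hsub p q hq
    rw [happ p hp1 hp2 hp3 hp4]
    exact hP p q hold
  · intro p q hq
    obtain ⟨hold, hp1, hp2, hp3, hp4, hq1, hq2, hq3, hq4⟩ := hsub p q hq
    rcases hQ p q hold with h | h
    · exact Or.inl (hok p q hold hp1 hp2 hp3 hp4 hq1 h)
    · exact Or.inr (hok q p (ConfAt_symm hold) hq1 hq2 hq3 hq4 hp1 h)

end StepM3

section MainStep

variable {n : ℕ} {ε : ℝ} {F : SimpleGraph V} [DecidableRel F.Adj]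
variable {J : SimpleGraph W} [DecidableRel J.Adj]

lemma step (hV : Fintype.card V = n) (hW : Fintype.card W = n)
    {Δ : ℕ} (hΔ1 : 1 ≤ Δ) (hJ : J.maxDegree ≤ Δ)
    (hb : ((BadV n ε F).card : ℝ) ≤ ε*n)
    (hn : (((Δ : ℝ))^2 + 4) * (ε*n) < n)
    (φ : W ≃ V) (hP : Pinv n ε F J φ) (hQ : Qinv n ε F J φ)
    (hne : (Conf (J := J) (F := F) φ).Nonempty) :
    ∃ φ' : W ≃ V, Pinv n ε F J φ' ∧ Qinv n ε F J φ' ∧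
      (Conf (J := J) (F := F) φ').card < (Conf (J := J) (F := F) φ).card := by
  classical
  obtain ⟨e, he⟩ := hne
  rw [mem_Conf] at he
  -- find a conflict with a valid endpoint
  obtain ⟨v, v₁, hconf, hvld⟩ : ∃ v v₁ : W, v₁ ∈ ConfAt (J := J) (F := F) φ v ∧
      Vld n ε F J φ v := by
    rcases hQ e.1 e.2 he with h | h
    · exact ⟨e.1, e.2, he, h⟩
    · exact ⟨e.2, e.1, ConfAt_symm he, h⟩
  have hv₁v : v₁ ≠ v := (J.ne_of_adj (mem_ConfAt.1 hconf).1).symm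
  have hβ : (1:ℝ) ≤ ε * n := by
    have h1 : φ v₁ ∈ Xset F (φ v) := mem_Xset.2
      ⟨fun hc => hv₁v (φ.injective hc), (mem_ConfAt.1 hconf).2⟩
    have h2 : 1 ≤ (Xset F (φ v)).card := Finset.card_pos.2 ⟨_, h1⟩
    have h3 := card_Xset_good hV hvld.1
    have h4 : (1:ℝ) ≤ ((Xset F (φ v)).card : ℝ) := by exact_mod_cast h2
    linarith
  have hΔR : (1:ℝ) ≤ (Δ : ℝ) := by exact_mod_cast hΔ1
  have hNvle : ((J.neighborFinset v).card : ℝ) ≤ (Δ : ℝ) := by exact_mod_cast degJ_le hJ v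
  by_cases hΔ2 : Δ = 2
  · -- the delicate case Δ = 2
    subst hΔ2
    norm_num at hn
    by_cases H1 : ∃ p, Vld n ε F J φ p ∧ 2 ≤ (ConfAt (J := J) (F := F) φ p).card
    · -- a valid vertex with two conflicts : weakened good swap
      obtain ⟨p, hpV, hp2⟩ := H1
      obtain ⟨u₁, hu₁⟩ := Finset.card_pos.1 (by omega : 0 < (ConfAt (J := J) (F := F) φ p).card)
      set R : Finset W := ((J.neighborFinset p).filter
        (fun z => z ∉ ConfAt (J := J) (F := F) φ p)) ∪ {u₁} with hRdef
      have hR : R ⊆ J.neighborFinset p := by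
        intro z hz
        rw [hRdef, Finset.mem_union] at hz
        rcases hz with hz | hz
        · exact Finset.mem_of_mem_filter _ hz
        · rw [Finset.mem_singleton] at hz
          exact hz ▸ ConfAt_subset_nbr hu₁
      have hu₁R : u₁ ∈ R := by rw [hRdef]; simp
      have hRC : ∀ z, J.Adj p z → z ∉ R →
          (¬ F.Adj (φ p) (φ z) ∧ z ≠ u₁) := by
        intro z hz hzR
        rw [hRdef, Finset.mem_union, Finset.mem_singleton] at hzR
        push_neg at hzR
        obtain ⟨hz1, hz2⟩ := hzR
        rw [Finset.mem_filter] at hz1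
        push_neg at hz1
        have hzC := hz1 (by simpa using hz)
        exact ⟨(mem_ConfAt.1 hzC).2, hz2⟩
      -- count : R has at most Δ - 1 elements
      have hRcard : (R.card : ℝ) ≤ 1 := by
        have h1 : R.card ≤ ((J.neighborFinset p).filter
            (fun z => z ∉ ConfAt (J := J) (F := F) φ p)).card + 1 := by
          rw [hRdef]
          exact le_trans (Finset.card_union_le _ _) (by simp)
        have h2 : ((J.neighborFinset p).filter
            (fun z => z ∉ ConfAt (J := J) (F := F) φ p)).card +
            ((J.neighborFinset p).filter
            (fun z => z ∈ ConfAt (J := J) (F := F) φ p)).card =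
            (J.neighborFinset p).card := by
          rw [add_comm]
          exact Finset.card_filter_add_card_filter_not (fun z => z ∈ ConfAt (J := J) (F := F) φ p)
        have h3 : (J.neighborFinset p).filter
            (fun z => z ∈ ConfAt (J := J) (F := F) φ p) = ConfAt (J := J) (F := F) φ p := by
          apply Finset.Subset.antisymm
          · intro z hz; exact (Finset.mem_filter.1 hz).2
          · intro z hz; exact Finset.mem_filter.2 ⟨ConfAt_subset_nbr hz, hz⟩
        have h4 : (J.neighborFinset p).card ≤ 2 := degJ_le hJ p
        rw [h3] at h2
        have : R.card ≤ 1 := by omega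
        exact_mod_cast this
      apply stepGood hV hW hJ φ hP hQ p u₁ hu₁ hpV R hR hu₁R hRC
      have hNple : ((J.neighborFinset p).card : ℝ) ≤ 2 := by exact_mod_cast degJ_le hJ p
      have h2e : (0:ℝ) ≤ 2*ε*n - 1 := by linarith
      push_cast
      nlinarith [mul_le_mul_of_nonneg_right hRcard h2e]
    · -- all valid vertices have a single conflict
      have Hsingle : ∀ p, Vld n ε F J φ p →
          (ConfAt (J := J) (F := F) φ p).card ≤ 1 := by
        intro p hp
        by_contra hc
        exact H1 ⟨p, hp, by omega⟩
      have hsingle_v : ∀ q ∈ ConfAt (J := J) (F := F) φ v, q = v₁ := by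
        intro q hq
        exact Finset.card_le_one.1 (Hsingle v hvld) q hq v₁ hconf
      have hHs : ∀ p, Vld n ε F J φ p → ∀ q ∈ ConfAt (J := J) (F := F) φ p,
          ∀ q' ∈ ConfAt (J := J) (F := F) φ p, q = q' := by
        intro p hp q hq q' hq'
        exact Finset.card_le_one.1 (Hsingle p hp) q hq q' hq'
      by_cases H2 : ∀ a b : W, b ∈ ConfAt (J := J) (F := F) φ a →
          ¬(a = v ∧ b = v₁) → ¬(a = v₁ ∧ b = v) →
          (a = v ∨ J.Adj v a ∨ b = v ∨ J.Adj v b) →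
          ∃ r, (r = a ∨ r = b) ∧ Vld n ε F J φ r ∧ r ≠ v ∧ ¬ J.Adj v r
      · -- free swap
        apply stepBad hV hW hJ φ hP hQ v v₁ hconf hvld H2
        have h2e : (0:ℝ) ≤ 2*ε*n - 1 := by linarith
        push_cast
        nlinarith [mul_le_mul_of_nonneg_right (by exact_mod_cast degJ_le hJ v :
          ((J.neighborFinset v).card : ℝ) ≤ 2) h2e]
      · push_neg at H2
        obtain ⟨a, b, hab, hne1, hne2, htouch, hnosafe⟩ := H2
        rcases hQ a b hab with hVa | hVb
        · by_cases hrv : a = v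
          · exact absurd (hsingle_v b (hrv ▸ hab)) (hne1 hrv)
          · have hadjvr : J.Adj v a := hnosafe a (Or.inl rfl) hVa hrv
            by_cases hrv₁ : a = v₁
            · exfalso
              have hvmem : v ∈ ConfAt (J := J) (F := F) φ a := by
                rw [hrv₁]; exact ConfAt_symm hconf
              exact (hne2 hrv₁) (hHs a hVa b hab v hvmem)
            · exact stepM3 hV hW hJ rfl φ hP hQ v v₁ a b hconf hvld hadjvr hrv₁ hVa hab
                hsingle_v hHs hb hβ (by push_cast at hn ⊢; linarith)
        · by_cases hrv : b = v
          · exact absurd hrv (hne2 (hsingle_v a (ConfAt_symm (hrv ▸ hab))))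
          · have hadjvr : J.Adj v b := hnosafe b (Or.inr rfl) hVb hrv
            by_cases hrv₁ : b = v₁
            · exfalso
              have hvmem : v ∈ ConfAt (J := J) (F := F) φ b := by
                rw [hrv₁]; exact ConfAt_symm hconf
              exact (hne1 (hHs b hVb a (ConfAt_symm hab) v hvmem)) hrv₁
            · exact stepM3 hV hW hJ rfl φ hP hQ v v₁ b a hconf hvld hadjvr hrv₁ hVb
                (ConfAt_symm hab) hsingle_v hHs hb hβ (by push_cast at hn ⊢; linarith)
  · -- Δ ≠ 2 : plain good swap
    apply stepGood hV hW hJ φ hP hQ v v₁ hconf hvld (J.neighborFinset v) (le_refl _).subset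
      (by simpa using (mem_ConfAt.1 hconf).1)
      (fun z hz hzR => absurd (by simpa using hz) hzR)
    have hcases : Δ = 1 ∨ 3 ≤ Δ := by omega
    have h2e : (0:ℝ) ≤ 2*ε*n - 1 := by linarith
    have hNt : ((J.neighborFinset v).card : ℝ) * (2*ε*n - 1) ≤ (Δ:ℝ) * (2*ε*n-1) :=
      mul_le_mul_of_nonneg_right hNvle h2e
    rcases hcases with h | h
    · subst h
      push_cast at hn hNvle hNt ⊢
      linarith
    · have h3R : (3:ℝ) ≤ (Δ:ℝ) := by exact_mod_cast h
      have hεn0 : (0:ℝ) < ε * n := by linarith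
      nlinarith [mul_nonneg (mul_nonneg (sub_nonneg.2 hΔR) (sub_nonneg.2 h3R)) (le_of_lt hεn0)]

end MainStep

section Descend

variable {n : ℕ} {ε : ℝ} {F : SimpleGraph V} [DecidableRel F.Adj]
variable {J : SimpleGraph W} [DecidableRel J.Adj]

lemma descend (hV : Fintype.card V = n) (hW : Fintype.card W = n)
    {Δ : ℕ} (hΔ1 : 1 ≤ Δ) (hJ : J.maxDegree ≤ Δ)
    (hb : ((BadV n ε F).card : ℝ) ≤ ε*n)
    (hn : (((Δ : ℝ))^2 + 4) * (ε*n) < n) :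
    ∀ (k : ℕ) (φ : W ≃ V), Pinv n ε F J φ → Qinv n ε F J φ →
      (Conf (J := J) (F := F) φ).card ≤ k →
      ∃ ψ : W ≃ V, Conf (J := J) (F := F) ψ = ∅ := by
  intro k
  induction k with
  | zero =>
    intro φ hP hQ hc
    exact ⟨φ, Finset.card_eq_zero.1 (Nat.le_zero.1 hc)⟩
  | succ k ih =>
    intro φ hP hQ hc
    by_cases hempty : Conf (J := J) (F := F) φ = ∅
    · exact ⟨φ, hempty⟩
    · obtain ⟨φ', hP', hQ', hlt⟩ := step hV hW hΔ1 hJ hb hn φ hP hQ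
        (Finset.nonempty_of_ne_empty hempty)
      exact ih φ' hP' hQ' (by omega)

end Descend

section Init

variable {n : ℕ} {ε : ℝ} {F : SimpleGraph V} [DecidableRel F.Adj]
variable {J : SimpleGraph W} [DecidableRel J.Adj]

lemma exists_ind3 {Δ : ℕ} (hJ : J.maxDegree ≤ Δ) (hW : Fintype.card W = n)
    (k : ℕ) (hk : (k : ℝ) * ((Δ : ℝ)^2 + 1) < n) :
    ∃ S : Finset W, S.card = k ∧
      ∀ s ∈ S, ∀ t ∈ S, s ≠ t → ¬ J.Adj s t ∧ ∀ u, ¬(J.Adj s u ∧ J.Adj t u) := by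
  induction k with
  | zero => exact ⟨∅, rfl, by simp⟩
  | succ k ih =>
    have hΔpos : (0:ℝ) < (Δ:ℝ)^2 + 1 := by positivity
    have hkk : ((k:ℝ) + 1) * ((Δ : ℝ)^2 + 1) < n := by
      push_cast at hk
      linarith
    have hk' : (k : ℝ) * ((Δ : ℝ)^2 + 1) < n := by nlinarith
    obtain ⟨S, hcard, hind⟩ := ih hk'
    set ball : Finset W := S.biUnion (fun s => insert s
      ((J.neighborFinset s).biUnion (fun u => insert u ((J.neighborFinset u).erase s))))
      with hball
    have hballcard : (ball.card : ℝ) ≤ (k : ℝ) * ((Δ : ℝ)^2 + 1) := by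
      have h1 : ball.card ≤ ∑ s ∈ S, (insert s
          ((J.neighborFinset s).biUnion (fun u => insert u ((J.neighborFinset u).erase s)))).card :=
        Finset.card_biUnion_le
      have h2 : ∀ s : W, (insert s
          ((J.neighborFinset s).biUnion (fun u => insert u ((J.neighborFinset u).erase s)))).card
          ≤ Δ^2 + 1 := by
        intro s
        have h3 : ((J.neighborFinset s).biUnion
            (fun u => insert u ((J.neighborFinset u).erase s))).card ≤ Δ^2 := by
          have h4 : ∀ u ∈ J.neighborFinset s,
              (insert u ((J.neighborFinset u).erase s)).card ≤ Δ := by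
            intro u hu
            have hsu : s ∈ J.neighborFinset u := by
              rw [SimpleGraph.mem_neighborFinset] at hu ⊢
              exact hu.symm
            have h5 := Finset.card_insert_le u ((J.neighborFinset u).erase s)
            rw [Finset.card_erase_of_mem hsu] at h5
            have h6 : 1 ≤ (J.neighborFinset u).card := Finset.card_pos.2 ⟨s, hsu⟩
            have h7 : (J.neighborFinset u).card ≤ Δ := degJ_le hJ u
            omega
          calc ((J.neighborFinset s).biUnion
              (fun u => insert u ((J.neighborFinset u).erase s))).card
              ≤ ∑ u ∈ J.neighborFinset s, (insert u ((J.neighborFinset u).erase s)).card :=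
                Finset.card_biUnion_le
            _ ≤ ∑ _u ∈ J.neighborFinset s, Δ := Finset.sum_le_sum h4
            _ = (J.neighborFinset s).card * Δ := by rw [Finset.sum_const, smul_eq_mul]
            _ ≤ Δ * Δ := Nat.mul_le_mul_right Δ (degJ_le hJ s)
            _ = Δ^2 := (sq Δ).symm
        have := Finset.card_insert_le s ((J.neighborFinset s).biUnion
          (fun u => insert u ((J.neighborFinset u).erase s)))
        omega
      have h8 : ball.card ≤ k * (Δ^2 + 1) := by
        calc ball.card ≤ _ := h1
          _ ≤ ∑ _s ∈ S, (Δ^2 + 1) := Finset.sum_le_sum (fun s _ => h2 s)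
          _ = S.card * (Δ^2 + 1) := by rw [Finset.sum_const, smul_eq_mul]
          _ = k * (Δ^2 + 1) := by rw [hcard]
      calc (ball.card : ℝ) ≤ ((k * (Δ^2 + 1) : ℕ) : ℝ) := by exact_mod_cast h8
        _ = (k : ℝ) * ((Δ : ℝ)^2 + 1) := by push_cast; ring
    obtain ⟨w, hw⟩ := exists_not_mem hW ball (lt_of_le_of_lt hballcard hk')
    have hwS : w ∉ S := by
      intro h
      exact hw (by rw [hball]; exact Finset.mem_biUnion.2 ⟨w, h, by simp⟩)
    have hkey : ∀ t ∈ S, ¬ J.Adj w t ∧ ∀ u, ¬(J.Adj w u ∧ J.Adj t u) := by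
      intro t ht
      constructor
      · intro hadj
        apply hw
        rw [hball]
        refine Finset.mem_biUnion.2 ⟨t, ht, ?_⟩
        refine Finset.mem_insert.2 (Or.inr ?_)
        refine Finset.mem_biUnion.2 ⟨w, by simpa using hadj.symm, by simp⟩
      · intro u hu
        apply hw
        rw [hball]
        refine Finset.mem_biUnion.2 ⟨t, ht, ?_⟩
        refine Finset.mem_insert.2 (Or.inr ?_)
        refine Finset.mem_biUnion.2 ⟨u, by simpa using hu.2, ?_⟩
        refine Finset.mem_insert.2 (Or.inr ?_)
        rw [Finset.mem_erase]
        refine ⟨fun hc => hwS (hc ▸ ht), by simpa using hu.1.symm⟩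
    refine ⟨insert w S, by rw [Finset.card_insert_of_notMem hwS, hcard], ?_⟩
    intro s hs t ht hst
    rw [Finset.mem_insert] at hs ht
    rcases hs with hs | hs
    · rcases ht with ht | ht
      · exact absurd (hs.trans ht.symm) hst
      · exact hs ▸ hkey t ht
    · rcases ht with ht | ht
      · subst ht
        obtain ⟨h1, h2⟩ := hkey s hs
        exact ⟨fun hadj => h1 hadj.symm, fun u hu => h2 u ⟨hu.2, hu.1⟩⟩
      · exact hind s hs t ht hst

lemma exists_partial (hV : Fintype.card V = n) (hW : Fintype.card W = n)
    {Δ : ℕ} (hΔ1 : 1 ≤ Δ) (hJ : J.maxDegree ≤ Δ)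
    (hmin : ∀ z : V, 3*(Δ:ℝ)*ε*(n:ℝ) ≤ (F.degree z : ℝ))
    (hb : ((BadV n ε F).card : ℝ) ≤ ε*n)
    (hsign : (0:ℝ) ≤ 2*ε*n - 1)
    (hV0 : Nonempty V)
    (S : Finset W) (hcard : S.card = (BadV n ε F).card)
    (hind : ∀ s ∈ S, ∀ t ∈ S, s ≠ t → ¬ J.Adj s t ∧ ∀ u, ¬(J.Adj s u ∧ J.Adj t u)) :
    ∀ L : Finset W, L ⊆ S.biUnion (fun s => J.neighborFinset s) →
    ∃ g : W → V, Set.InjOn g ↑(S ∪ L) ∧ (∀ s ∈ S, g s ∈ BadV n ε F) ∧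
      (∀ u ∈ L, g u ∉ BadV n ε F) ∧
      (∀ p ∈ S ∪ L, ∀ q ∈ S ∪ L, J.Adj p q → F.Adj (g p) (g q)) := by
  classical
  have hdisj : ∀ t ∈ S.biUnion (fun s => J.neighborFinset s), t ∉ S := by
    intro t ht htS
    rw [Finset.mem_biUnion] at ht
    obtain ⟨s, hs, hadj⟩ := ht
    rw [SimpleGraph.mem_neighborFinset] at hadj
    exact (hind s hs t htS (J.ne_of_adj hadj)).1 hadj
  have hNScard : (S.biUnion (fun s => J.neighborFinset s)).card ≤ Δ * S.card := by
    calc (S.biUnion (fun s => J.neighborFinset s)).card ≤ ∑ s ∈ S, (J.neighborFinset s).card :=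
        Finset.card_biUnion_le
      _ ≤ ∑ _s ∈ S, Δ := Finset.sum_le_sum (fun s _ => degJ_le hJ s)
      _ = S.card * Δ := by rw [Finset.sum_const, smul_eq_mul]
      _ = Δ * S.card := Nat.mul_comm _ _
  intro L
  induction L using Finset.induction_on with
  | empty =>
    intro _
    set σ := Finset.equivOfCardEq hcard with hσ
    refine ⟨fun p => if h : p ∈ S then (σ ⟨p, h⟩ : V) else hV0.some, ?_, ?_, ?_, ?_⟩
    · intro p hp q hq hpq
      rw [Finset.coe_union, Finset.coe_empty, Set.union_empty] at hp hq
      have hp' : p ∈ S := Finset.mem_coe.1 hp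
      have hq' : q ∈ S := Finset.mem_coe.1 hq
      simp only [dif_pos hp', dif_pos hq'] at hpq
      have : σ ⟨p, hp'⟩ = σ ⟨q, hq'⟩ := Subtype.ext hpq
      exact congrArg Subtype.val (σ.injective this)
    · intro s hs
      simp only [dif_pos hs]
      exact (σ ⟨s, hs⟩).2
    · intro u hu
      exact absurd hu (Finset.notMem_empty u)
    · intro p hp q hq hadj
      rw [Finset.union_empty] at hp hq
      exact absurd hadj (hind p hp q hq (J.ne_of_adj hadj)).1
  | @insert u L hu ih =>
    intro hsub'
    have huNS : u ∈ S.biUnion (fun s => J.neighborFinset s) := hsub' (Finset.mem_insert_self u L)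
    have hsubL : L ⊆ S.biUnion (fun s => J.neighborFinset s) :=
      fun z hz => hsub' (Finset.mem_insert_of_mem hz)
    obtain ⟨g, hInj, hgS, hgL, hgE⟩ := ih hsubL
    obtain ⟨s₀, hs₀S, hadj₀⟩ : ∃ s ∈ S, J.Adj s u := by
      rw [Finset.mem_biUnion] at huNS
      obtain ⟨s, hs, h⟩ := huNS
      exact ⟨s, hs, by simpa using h⟩
    have huS : u ∉ S := hdisj u huNS
    have hLS : ∀ q ∈ L, q ∉ S := fun q hq => hdisj q (hsubL hq)
    have hs₀L : s₀ ∉ L := fun h => hLS s₀ h hs₀S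
    set Nu : Finset W := (J.neighborFinset u) ∩ L with hNu
    set Excl : Finset V := BadV n ε F ∪ (S ∪ L).image g ∪ Nu.biUnion (fun q => Xset F (g q))
      with hExcl
    have hNucard : (Nu.card : ℝ) ≤ (Δ : ℝ) - 1 := by
      have h1 : Nu ⊆ (J.neighborFinset u).erase s₀ := by
        intro z hz
        rw [hNu, Finset.mem_inter] at hz
        rw [Finset.mem_erase]
        exact ⟨fun hc => hs₀L (hc ▸ hz.2), hz.1⟩
      have h4 : 1 ≤ (J.neighborFinset u).card :=
        Finset.card_pos.2 ⟨s₀, by simpa using hadj₀.symm⟩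
      have h2 : Nu.card ≤ (J.neighborFinset u).card - 1 := by
        have := Finset.card_le_card h1
        rwa [Finset.card_erase_of_mem (by simpa using hadj₀.symm)] at this
      have h3 : (J.neighborFinset u).card ≤ Δ := degJ_le hJ u
      have h5 : Nu.card ≤ Δ - 1 := by omega
      have h6 : (Nu.card : ℝ) ≤ ((Δ - 1 : ℕ) : ℝ) := by exact_mod_cast h5
      rw [Nat.cast_sub hΔ1] at h6
      simpa using h6
    have hLcard : (L.card : ℝ) ≤ (Δ:ℝ) * S.card - 1 := by
      have h2 := Finset.card_le_card hsub'
      rw [Finset.card_insert_of_notMem hu] at h2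
      have h3 : L.card + 1 ≤ Δ * S.card := le_trans h2 hNScard
      have h4 : (L.card : ℝ) + 1 ≤ ((Δ * S.card : ℕ) : ℝ) := by exact_mod_cast h3
      push_cast at h4
      linarith
    have hScard : ((S.card : ℕ) : ℝ) ≤ ε * n := by rw [hcard]; exact hb
    have hExclcard : (Excl.card : ℝ) < 3*(Δ:ℝ)*ε*n := by
      have h1 : ((Nu.biUnion (fun q => Xset F (g q))).card : ℝ) ≤
          (Nu.card : ℝ) * (2*ε*n - 1) := by
        have ha : (Nu.biUnion (fun q => Xset F (g q))).card ≤
            ∑ q ∈ Nu, (Xset F (g q)).card := Finset.card_biUnion_le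
        have hbb : (∑ q ∈ Nu, ((Xset F (g q)).card : ℝ)) ≤ ∑ _q ∈ Nu, (2*ε*n - 1) := by
          apply Finset.sum_le_sum
          intro q hq
          rw [hNu, Finset.mem_inter] at hq
          exact card_Xset_good hV (hgL q hq.2)
        calc ((Nu.biUnion (fun q => Xset F (g q))).card : ℝ)
            ≤ ∑ q ∈ Nu, ((Xset F (g q)).card : ℝ) := by exact_mod_cast ha
          _ ≤ ∑ _q ∈ Nu, (2*ε*n - 1) := hbb
          _ = Nu.card * (2*ε*n - 1) := by rw [Finset.sum_const, nsmul_eq_mul]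
      have h2 : ((((S ∪ L)).image g).card : ℝ) ≤ (S.card : ℝ) + L.card := by
        have ha := Finset.card_image_le (s := S ∪ L) (f := g)
        have hbb := Finset.card_union_le S L
        have hcc : ((S ∪ L).image g).card ≤ S.card + L.card := le_trans ha hbb
        exact_mod_cast hcc
      have h4 : (Excl.card : ℝ) ≤ ((BadV n ε F).card : ℝ) + (((S ∪ L)).image g).card
          + ((Nu.biUnion (fun q => Xset F (g q))).card : ℝ) := by
        have ha : Excl.card ≤ (BadV n ε F ∪ (S ∪ L).image g).card +
            (Nu.biUnion (fun q => Xset F (g q))).card := by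
          rw [hExcl]; exact Finset.card_union_le _ _
        have hbb := Finset.card_union_le (BadV n ε F) ((S ∪ L).image g)
        have hcc : Excl.card ≤ (BadV n ε F).card + ((S ∪ L).image g).card +
            (Nu.biUnion (fun q => Xset F (g q))).card := by omega
        exact_mod_cast hcc
      have h5 : (Nu.card:ℝ) * (2*ε*n - 1) ≤ ((Δ:ℝ) - 1)*(2*ε*n - 1) :=
        mul_le_mul_of_nonneg_right hNucard hsign
      have hΔR : (1:ℝ) ≤ (Δ:ℝ) := by exact_mod_cast hΔ1
      have hms : (Δ:ℝ) * (S.card:ℝ) ≤ (Δ:ℝ) * (ε * n) :=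
        mul_le_mul_of_nonneg_left hScard (by positivity)
      nlinarith
    have hCand : ((F.neighborFinset (g s₀)) \ Excl).Nonempty := by
      by_contra hcon
      rw [Finset.not_nonempty_iff_eq_empty, Finset.sdiff_eq_empty_iff_subset] at hcon
      have h1 := Finset.card_le_card hcon
      have hdeg : 3*(Δ:ℝ)*ε*n ≤ ((F.neighborFinset (g s₀)).card : ℝ) := by
        rw [SimpleGraph.card_neighborFinset_eq_degree]; exact hmin _
      have h2 : ((F.neighborFinset (g s₀)).card : ℝ) ≤ (Excl.card : ℝ) := by exact_mod_cast h1
      linarith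
    obtain ⟨c, hcmem⟩ := hCand
    rw [Finset.mem_sdiff] at hcmem
    obtain ⟨hcN, hcE⟩ := hcmem
    rw [hExcl] at hcE
    simp only [Finset.mem_union, not_or] at hcE
    obtain ⟨⟨hcB, hcI⟩, hcX⟩ := hcE
    have hup : ∀ p, p ≠ u → Function.update g u c p = g p :=
      fun p hp => Function.update_of_ne hp _ _
    have huu : Function.update g u c u = c := Function.update_self _ _ _
    have hmem : ∀ r, r ∈ S ∪ insert u L → r ≠ u → r ∈ S ∪ L := by
      intro r hr hru
      rcases Finset.mem_union.1 hr with h | h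
      · exact Finset.mem_union_left _ h
      · rcases Finset.mem_insert.1 h with h' | h'
        · exact absurd h' hru
        · exact Finset.mem_union_right _ h'
    have hnew : ∀ q ∈ S ∪ L, J.Adj u q → F.Adj c (g q) := by
      intro q hq hadj
      rcases Finset.mem_union.1 hq with hqS | hqL
      · have hqs₀ : q = s₀ := by
          by_contra hne
          exact (hind q hqS s₀ hs₀S hne).2 u ⟨hadj.symm, hadj₀⟩
        subst hqs₀
        exact (by simpa using hcN : F.Adj (g q) c).symm
      · have hqNu : q ∈ Nu := Finset.mem_inter.2 ⟨by simpa using hadj, hqL⟩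
        have hnx : c ∉ Xset F (g q) := fun h => hcX (Finset.mem_biUnion.2 ⟨q, hqNu, h⟩)
        rw [mem_Xset] at hnx
        push_neg at hnx
        by_cases hceq : c = g q
        · exact absurd (hceq ▸ Finset.mem_image_of_mem g hq) hcI
        · exact (hnx hceq).symm
    refine ⟨Function.update g u c, ?_, ?_, ?_, ?_⟩
    · intro p hp q hq hpq
      have hp' : p ∈ S ∪ insert u L := Finset.mem_coe.1 hp
      have hq' : q ∈ S ∪ insert u L := Finset.mem_coe.1 hq
      by_cases hpu : p = u
      · by_cases hqu : q = u
        · exact hpu.trans hqu.symm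
        · exfalso
          rw [hpu, huu, hup q hqu] at hpq
          exact hcI (hpq ▸ Finset.mem_image_of_mem g (hmem q hq' hqu))
      · by_cases hqu : q = u
        · exfalso
          rw [hqu, huu, hup p hpu] at hpq
          exact hcI (hpq ▸ Finset.mem_image_of_mem g (hmem p hp' hpu))
        · rw [hup p hpu, hup q hqu] at hpq
          exact hInj (Finset.mem_coe.2 (hmem p hp' hpu)) (Finset.mem_coe.2 (hmem q hq' hqu)) hpq
    · intro s hs
      rw [hup s (fun hc => huS (hc ▸ hs))]
      exact hgS s hs
    · intro q hq
      rcases Finset.mem_insert.1 hq with h | h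
      · rw [h, huu]; exact hcB
      · rw [hup q (fun hc => hu (hc ▸ h))]
        exact hgL q h
    · intro p hp q hq hadj
      by_cases hpu : p = u
      · by_cases hqu : q = u
        · exact absurd ((hpu.trans hqu.symm) ▸ hadj) (J.irrefl)
        · rw [hpu, huu, hup q hqu]
          exact hnew q (hmem q hq hqu) (hpu ▸ hadj)
      · by_cases hqu : q = u
        · rw [hqu, huu, hup p hpu]
          exact (hnew p (hmem p hp hpu) (hqu ▸ hadj.symm)).symm
        · rw [hup p hpu, hup q hqu]
          exact hgE p (hmem p hp hpu) q (hmem q hq hqu) hadj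

end Init

section Build

variable {n : ℕ} {ε : ℝ} {F : SimpleGraph V} [DecidableRel F.Adj]
variable {J : SimpleGraph W} [DecidableRel J.Adj]

lemma build_init (hV : Fintype.card V = n) (hW : Fintype.card W = n)
    {Δ : ℕ} (hΔ1 : 1 ≤ Δ) (hJ : J.maxDegree ≤ Δ)
    (hmin : ∀ z : V, 3*(Δ:ℝ)*ε*(n:ℝ) ≤ (F.degree z : ℝ))
    (hb : ((BadV n ε F).card : ℝ) ≤ ε*n)
    (hn : (((Δ : ℝ))^2 + 4) * (ε*n) < n)
    (hsign : (0:ℝ) ≤ 2*ε*n - 1)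
    (hn1 : 1 ≤ n) :
    ∃ φ₀ : W ≃ V, Pinv n ε F J φ₀ ∧ Qinv n ε F J φ₀ := by
  classical
  have hV0 : Nonempty V := by
    rw [← Fintype.card_pos_iff, hV]; omega
  have hεn0 : (0:ℝ) ≤ ε * n := by linarith
  have hkS : (((BadV n ε F).card : ℝ)) * ((Δ:ℝ)^2 + 1) < n := by
    have h1 : (((BadV n ε F).card : ℝ)) * ((Δ:ℝ)^2 + 1) ≤ (ε*n) * ((Δ:ℝ)^2 + 1) :=
      mul_le_mul_of_nonneg_right hb (by positivity)
    have h2 : (ε*n) * ((Δ:ℝ)^2 + 1) ≤ (ε*n) * ((Δ:ℝ)^2 + 4) :=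
      mul_le_mul_of_nonneg_left (by linarith) hεn0
    calc (((BadV n ε F).card : ℝ)) * ((Δ:ℝ)^2 + 1) ≤ (ε*n) * ((Δ:ℝ)^2 + 1) := h1
      _ ≤ (ε*n) * ((Δ:ℝ)^2 + 4) := h2
      _ = ((Δ:ℝ)^2 + 4) * (ε*n) := by ring
      _ < n := hn
  obtain ⟨S, hScard, hind⟩ := exists_ind3 hJ hW (BadV n ε F).card hkS
  set NS := S.biUnion (fun s => J.neighborFinset s) with hNS
  obtain ⟨g, hInj, hgS, hgL, hgE⟩ := exists_partial hV hW hΔ1 hJ hmin hb hsign hV0 S hScard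
    hind NS (Finset.Subset.refl _)
  set T := S ∪ NS with hT
  have hdisjSN : ∀ t ∈ NS, t ∉ S := by
    intro t ht htS
    rw [hNS, Finset.mem_biUnion] at ht
    obtain ⟨s, hs, hadj⟩ := ht
    rw [SimpleGraph.mem_neighborFinset] at hadj
    exact (hind s hs t htS (J.ne_of_adj hadj)).1 hadj
  have hInjS : Set.InjOn g ↑S := hInj.mono (by
    rw [hT, Finset.coe_union]; exact Set.subset_union_left)
  have hBim : BadV n ε F = S.image g := by
    refine (Finset.eq_of_subset_of_card_le ?_ ?_).symm
    · intro z hz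
      rw [Finset.mem_image] at hz
      obtain ⟨s, hs, rfl⟩ := hz
      exact hgS s hs
    · rw [Finset.card_image_of_injOn hInjS, hScard]
  have hTcard : (T.image g).card = T.card := Finset.card_image_of_injOn hInj
  have hcompl_card : (Finset.univ \ T).card = (Finset.univ \ T.image g).card := by
    rw [Finset.card_sdiff_of_subset (Finset.subset_univ _), Finset.card_sdiff_of_subset (Finset.subset_univ _),
      Finset.card_univ, Finset.card_univ, hV, hW, hTcard]
  set e2 := Finset.equivOfCardEq hcompl_card with he2
  have hmemc : ∀ p : W, p ∉ T → p ∈ Finset.univ \ T := by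
    intro p hp; rw [Finset.mem_sdiff]; exact ⟨Finset.mem_univ _, hp⟩
  set f : W → V := fun p => if h : p ∈ T then g p else (e2 ⟨p, hmemc p h⟩ : V) with hf
  have hfT : ∀ p ∈ T, f p = g p := by
    intro p hp; rw [hf]; simp only [dif_pos hp]
  have hfc : ∀ (p : W) (hp : p ∉ T), f p = (e2 ⟨p, hmemc p hp⟩ : V) := by
    intro p hp; rw [hf]; simp only [dif_neg hp]
  have hfcmem : ∀ (p : W) (hp : p ∉ T), f p ∉ T.image g := by
    intro p hp
    rw [hfc p hp]
    have := (e2 ⟨p, hmemc p hp⟩).2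
    rw [Finset.mem_sdiff] at this
    exact this.2
  have hinjf : Function.Injective f := by
    intro p q hpq
    by_cases hp : p ∈ T
    · by_cases hq : q ∈ T
      · rw [hfT p hp, hfT q hq] at hpq
        exact hInj (Finset.mem_coe.2 hp) (Finset.mem_coe.2 hq) hpq
      · exfalso
        apply hfcmem q hq
        rw [← hpq, hfT p hp]
        exact Finset.mem_image_of_mem g hp
    · by_cases hq : q ∈ T
      · exfalso
        apply hfcmem p hp
        rw [hpq, hfT q hq]
        exact Finset.mem_image_of_mem g hq
      · rw [hfc p hp, hfc q hq] at hpq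
        have := e2.injective (Subtype.ext hpq)
        exact congrArg Subtype.val this
  have hbij : Function.Bijective f :=
    (Fintype.bijective_iff_injective_and_card f).2 ⟨hinjf, hW.trans hV.symm⟩
  set φ₀ := Equiv.ofBijective f hbij with hφ₀
  have happ : ∀ p, φ₀ p = f p := fun p => rfl
  have hBiff : ∀ p, φ₀ p ∈ BadV n ε F ↔ p ∈ S := by
    intro p
    constructor
    · intro h
      by_cases hpS : p ∈ S
      · exact hpS
      · exfalso
        by_cases hp : p ∈ T
        · have hpNS : p ∈ NS := by
            rcases Finset.mem_union.1 hp with h' | h'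
            · exact absurd h' hpS
            · exact h'
          rw [happ, hfT p hp] at h
          exact hgL p hpNS h
        · apply hfcmem p hp
          rw [← happ]
          rw [hBim] at h
          exact Finset.image_subset_image (Finset.subset_union_left) h
    · intro h
      have hpT : p ∈ T := Finset.mem_union_left _ h
      rw [happ, hfT p hpT]
      exact hgS p h
  have hnbrNS : ∀ p q : W, q ∈ S → J.Adj q p → p ∈ NS := by
    intro p q hqS hadj
    rw [hNS, Finset.mem_biUnion]
    exact ⟨q, hqS, by simpa using hadj⟩
  refine ⟨φ₀, ?_, ?_⟩
  · intro p q hq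
    rw [mem_ConfAt] at hq
    intro hmem
    have hpS : p ∈ S := (hBiff p).1 hmem
    have hqNS : q ∈ NS := hnbrNS q p hpS hq.1
    apply hq.2
    rw [happ, happ, hfT p (Finset.mem_union_left _ hpS), hfT q (Finset.mem_union_right _ hqNS)]
    exact hgE p (Finset.mem_union_left _ hpS) q (Finset.mem_union_right _ hqNS) hq.1
  · intro p q hq
    rw [mem_ConfAt] at hq
    have key : ∀ r, r ∉ T → Vld n ε F J φ₀ r := by
      intro r hr
      constructor
      · intro h
        exact hr (Finset.mem_union_left _ ((hBiff r).1 h))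
      · intro q' hq' h
        have hq'S : q' ∈ S := (hBiff q').1 h
        exact hr (Finset.mem_union_right _ (hnbrNS r q' hq'S hq'.symm))
    by_cases hp : p ∈ T
    · by_cases hqT : q ∈ T
      · exfalso
        apply hq.2
        rw [happ, happ, hfT p hp, hfT q hqT]
        exact hgE p hp q hqT hq.1
      · exact Or.inr (key q hqT)
    · exact Or.inl (key p hp)

end Build

end GenEmbedAux

/-- Embedding lemma: a dense-enough `n`-vertex graph contains every `n`-vertex graph of
maximum degree at most `Δ`. -/
theorem gen_embed {V W : Type} [Fintype V] [Fintype W] (Δ n : ℕ) (ε : ℝ)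
    (hΔ : 1 ≤ Δ) (hε0 : 0 < ε) (hε : ε < 1 / ((Δ : ℝ)^2 + 4))
    (F : SimpleGraph V) [DecidableRel F.Adj] (hV : Fintype.card V = n)
    (hmin : ∀ v, 3 * (Δ : ℝ) * ε * n ≤ (F.degree v : ℝ))
    (hmost : ((Finset.univ.filter fun v =>
        ((F.degree v : ℝ) < (1 - 2*ε) * n)).card : ℝ) ≤ ε * n)
    (J : SimpleGraph W) [DecidableRel J.Adj] (hW : Fintype.card W = n)
    (hJ : J.maxDegree ≤ Δ) :
    Embeds J F := by
  classical
  open GenEmbedAux in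
  by_cases hn0 : n = 0
  · have : IsEmpty W := Fintype.card_eq_zero_iff.1 (by rw [hW, hn0])
    exact ⟨fun w => (IsEmpty.false w).elim, fun a b _ => (IsEmpty.false a).elim,
      fun u v h => (IsEmpty.false u).elim⟩
  · have hn1 : 1 ≤ n := by omega
    have hV0 : Nonempty V := by rw [← Fintype.card_pos_iff, hV]; omega
    have hnR : (0:ℝ) < n := by exact_mod_cast Nat.pos_of_ne_zero hn0
    have hD4 : (0:ℝ) < (Δ:ℝ)^2 + 4 := by positivity
    have hεD : ε * ((Δ:ℝ)^2 + 4) < 1 := by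
      rw [lt_div_iff₀ hD4] at hε
      linarith
    have hn : (((Δ : ℝ))^2 + 4) * (ε*n) < n := by nlinarith
    have hb : ((GenEmbedAux.BadV (V := V) n ε F).card : ℝ) ≤ ε*n := hmost
    have hsign : (0:ℝ) ≤ 2*ε*n - 1 := by
      by_contra hc
      push_neg at hc
      have hBempty : GenEmbedAux.BadV (V := V) n ε F = ∅ := by
        rw [← Finset.card_eq_zero]
        by_contra hne
        have h1 : 1 ≤ (GenEmbedAux.BadV (V := V) n ε F).card := Nat.pos_of_ne_zero hne
        have h2 : (1:ℝ) ≤ ((GenEmbedAux.BadV (V := V) n ε F).card : ℝ) := by exact_mod_cast h1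
        have hΔ1R : (1:ℝ) ≤ (Δ:ℝ) := by exact_mod_cast hΔ
        nlinarith
      obtain ⟨v₀⟩ := hV0
      have hv₀ : v₀ ∉ GenEmbedAux.BadV (V := V) n ε F := by
        rw [hBempty]
        exact Finset.notMem_empty _
      have h3 := GenEmbedAux.good_deg (n := n) (ε := ε) hv₀
      have h4 : F.degree v₀ < Fintype.card V := F.degree_lt_card_verts v₀
      rw [hV] at h4
      have h5 : ((F.degree v₀ : ℕ) : ℝ) ≤ (n:ℝ) - 1 := by
        have : F.degree v₀ + 1 ≤ n := h4
        have := (Nat.cast_le (α := ℝ)).2 this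
        push_cast at this
        linarith
      nlinarith
    obtain ⟨φ₀, hP, hQ⟩ := GenEmbedAux.build_init hV hW hΔ hJ hmin hb hn hsign hn1
    obtain ⟨ψ, hψ⟩ := GenEmbedAux.descend hV hW hΔ hJ hb hn
      (GenEmbedAux.Conf (J := J) (F := F) φ₀).card φ₀ hP hQ (le_refl _)
    refine ⟨ψ, ψ.injective, ?_⟩
    intro u v h
    by_contra hc
    have : (u, v) ∈ GenEmbedAux.Conf (J := J) (F := F) ψ :=
      GenEmbedAux.mem_Conf.2 (GenEmbedAux.mem_ConfAt.2 ⟨h, hc⟩)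
    rw [hψ] at this
    exact absurd this (Finset.notMem_empty _)
end

section
/- Let G be a graph containing two vertex-disjoint cycles, one of length t and one of length t'. If G contains no cycle of length greater than t, then the bipartite graph between the vertex sets of the two cycles contains no copy of K_{s,s}, where s = ⌈t/t'⌉ + 2. -/
open SimpleGraph Finset

section Helpers
open SimpleGraph Walk List

variable {V : Type} [DecidableEq V] {G : SimpleGraph V} {u v w y : V}

/-- takeUntil length = indexOf in support. -/
lemma length_takeUntil_eq_indexOf (p : G.Walk u w) (h : y ∈ p.support) :
    (p.takeUntil y h).length = p.support.idxOf y := by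
  induction p with
  | nil =>
    rename_i a
    have : y = a := by simpa using h
    subst this
    simp [takeUntil]
  | cons r p ih =>
    rename_i a b c
    by_cases hyu : y = a
    · subst hyu
      simp [takeUntil]
    · have h' : y ∈ p.support := by
        rcases (by simpa using h : y = a ∨ y ∈ p.support) with h1 | h1
        · exact absurd h1 hyu
        · exact h1
      simp [takeUntil, Ne.symm hyu, ih h', List.idxOf_cons_ne _ (Ne.symm hyu)]

lemma indexOf_concat_nodup {α : Type*} [DecidableEq α] {l : List α} {a : α}
    (hn : (l ++ [a]).Nodup) : (l ++ [a]).idxOf a = l.length := by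
  have hna : a ∉ l := fun hmem => (List.nodup_append'.mp hn).2.2 hmem (List.mem_singleton_self _)
  rw [List.idxOf_append_of_notMem hna, List.idxOf_cons_self]
  omega

lemma indexOf_getLast_nodup {α : Type*} [DecidableEq α] {l : List α} (h : l ≠ [])
    (hn : l.Nodup) {a : α} (ha : l.getLast h = a) : l.idxOf a = l.length - 1 := by
  have hdl : l.dropLast ++ [a] = l := by rw [← ha]; exact List.dropLast_append_getLast h
  have h2 := indexOf_concat_nodup (a := a) (l := l.dropLast) (by rw [hdl]; exact hn)
  rw [hdl] at h2
  rw [h2]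
  simp

lemma mem_tail_of_closed {c : G.Walk u u} (hnil : ¬ c.Nil) (hy : y ∈ c.support) :
    y ∈ c.support.tail := by
  cases c with
  | nil => simp at hnil
  | cons r q =>
    simp only [Walk.support_cons, List.tail_cons]
    rcases (by simpa using hy : y = u ∨ y ∈ q.support) with h1 | h1
    · exact h1 ▸ q.end_mem_support
    · exact h1

lemma indexOf_support_lt_length_closed {c : G.Walk u u} (hnil : ¬ c.Nil)
    (hy : y ∈ c.support) : c.support.idxOf y < c.length := by
  have h1 : c.support.idxOf y < c.length + 1 := by
    rw [← Walk.length_support]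
    exact List.idxOf_lt_length_iff.mpr hy
  have hlen : c.length ≠ 0 := fun h => hnil (Walk.nil_iff_length_eq.mpr h)
  by_contra hcon
  have heq : c.support.idxOf y = c.length := by omega
  have h2 : c.support.idxOf y < c.support.length := List.idxOf_lt_length_iff.mpr hy
  have h3 : c.support[c.support.idxOf y] = y := List.getElem_idxOf h2
  have h4 : c.support.getLast (by simp) = u := c.getLast_support
  rw [List.getLast_eq_getElem] at h4
  have h5 : c.support.length - 1 = c.length := by rw [Walk.length_support]; omega
  have e1 : c.support[c.support.idxOf y]? = some y := by
    rw [List.getElem?_eq_getElem h2, h3]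
  have e2 : c.support[c.support.length - 1]? = some u := by
    rw [List.getElem?_eq_getElem (by omega), h4]
  rw [show c.support.idxOf y = c.support.length - 1 from by omega] at e1
  rw [e2] at e1
  have h6 : y = u := by simpa using e1.symm
  subst h6
  rw [c.support_eq_cons, List.idxOf_cons_self] at heq
  omega

lemma walk_length_rotate {x : V} {c : G.Walk u u} (hx : x ∈ c.support) :
    (c.rotate x hx).length = c.length := by
  have h := congrArg Walk.length (take_spec c hx)
  rw [Walk.length_append] at h
  rw [Walk.rotate, Walk.length_append]
  omega

set_option linter.unusedSectionVars false

lemma walk_support_getLast? (p : G.Walk u v) : p.support.getLast? = some v := by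
  rw [List.getLast?_eq_getLast_of_ne_nil (by simp)]
  exact congrArg some p.getLast_support

lemma dropUntil_isPath_of_cycle {x : V} {c : G.Walk u u} (hc : c.IsCycle)
    (hx : x ∈ c.support) (hxu : x ≠ u) : (c.dropUntil x hx).IsPath := by
  have htl : c.support.tail = (c.takeUntil x hx).support.tail ++ (c.dropUntil x hx).support.tail := by
    rw [← tail_support_append, take_spec]
  have hnd : ((c.takeUntil x hx).support.tail ++ (c.dropUntil x hx).support.tail).Nodup := by
    rw [← htl]
    exact ((Walk.isCycle_def _).mp hc).2.2
  apply Walk.IsPath.mk'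
  rw [(c.dropUntil x hx).support_eq_cons]
  refine List.nodup_cons.mpr ⟨?_, (List.nodup_append'.mp hnd).2.1⟩
  have hxT : x ∈ (c.takeUntil x hx).support := (c.takeUntil x hx).end_mem_support
  rw [(c.takeUntil x hx).support_eq_cons] at hxT
  have hxA : x ∈ (c.takeUntil x hx).support.tail := by
    rcases (List.mem_cons.mp hxT) with h | h
    · exact absurd h hxu
    · exact h
  exact fun hxB => (List.nodup_append'.mp hnd).2.2 hxA hxB

/-- The main arc lemma. -/
lemma arc_exists {x y : V} (c : G.Walk u u) (hc : c.IsCycle) (hx : x ∈ c.support)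
    (hy : y ∈ c.support) (hxy : y ≠ x) :
    ∃ P : G.Walk y x, P.IsPath ∧ (∀ z ∈ P.support, z ∈ c.support) ∧
      P.length + (if c.support.idxOf x < c.support.idxOf y
        then c.support.idxOf y - c.support.idxOf x
        else c.length - c.support.idxOf x + c.support.idxOf y) = c.length := by
  classical
  set T := c.takeUntil x hx with hT
  set D := c.dropUntil x hx with hD
  set A := T.support.tail with hA
  set B := D.support.tail with hB
  have hTD : T.append D = c := take_spec c hx
  have hsup : c.support = T.support ++ B := by
    conv_lhs => rw [← hTD]
    rw [Walk.support_append]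
  have hTs : T.support = u :: A := T.support_eq_cons
  have hDs : D.support = x :: B := D.support_eq_cons
  have htl : c.support.tail = A ++ B := by
    conv_lhs => rw [← hTD]
    rw [tail_support_append]
  have hnodup : (A ++ B).Nodup := htl ▸ ((Walk.isCycle_def _).mp hc).2.2
  have hlenTD : T.length + D.length = c.length := by
    have := congrArg Walk.length hTD
    rwa [Walk.length_append] at this
  have hAlen : A.length = T.length := by
    have h1 := T.length_support
    rw [hTs] at h1
    simp at h1
    omega
  have hBlen : B.length = D.length := by
    have h1 := D.length_support
    rw [hDs] at h1
    simp at h1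
    omega
  have hkx : T.length = c.support.idxOf x := length_takeUntil_eq_indexOf c hx
  have hposx_lt : c.support.idxOf x < c.length :=
    indexOf_support_lt_length_closed hc.not_nil hx
  have hposy_lt : c.support.idxOf y < c.length :=
    indexOf_support_lt_length_closed hc.not_nil hy
  have hDlen : D.length ≠ 0 := by omega
  have hBne : B ≠ [] := by
    intro h
    rw [h] at hBlen
    simp at hBlen
    omega
  have hBlast : B.getLast? = some u := by
    have h1 : D.support.getLast? = some u := walk_support_getLast? D
    have h2 : B.getLast? = some (B.getLast hBne) := List.getLast?_eq_getLast_of_ne_nil hBne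
    have h3 : B.getLast hBne ∈ (x :: B).getLast? := List.mem_getLast?_cons (by rw [h2]; rfl)
    rw [hDs] at h1
    rw [h1, Option.mem_def, Option.some_inj] at h3
    rw [h2, h3]
  have huB : u ∈ B := by
    have := List.dropLast_append_getLast? u hBlast
    rw [← this]
    simp
  have hdisjAB : ∀ z ∈ A, z ∉ B := fun z hz => (List.nodup_append'.mp hnodup).2.2 hz
  have hrotsup : (c.rotate x hx).support = (x :: B) ++ A := by
    rw [Walk.rotate, Walk.support_append]
    rw [← hDs, ← hA]
  have hyAB : y = u ∨ y ∈ A ∨ y ∈ B := by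
    rw [hsup, hTs] at hy
    simpa using hy
  have hyrot : y ∈ (c.rotate x hx).support := by
    rw [hrotsup]
    rcases hyAB with h1 | h1 | h1
    · subst h1; simp [huB]
    · simp [h1]
    · simp [h1]
  have hrotcyc : (c.rotate x hx).IsCycle := hc.rotate hx
  refine ⟨(c.rotate x hx).dropUntil y hyrot, dropUntil_isPath_of_cycle hrotcyc hyrot hxy, ?_, ?_⟩
  · intro z hz
    have h1 := Walk.support_dropUntil_subset _ hyrot hz
    rw [hrotsup] at h1
    rcases (by simpa using h1 : z = x ∨ z ∈ B ∨ z ∈ A) with h2 | h2 | h2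
    · exact h2 ▸ hx
    · rw [hsup]; exact List.mem_append_right _ h2
    · rw [hsup, hTs]; exact List.mem_append_left _ (List.mem_cons_of_mem _ h2)
  · -- length computation
    have hsplit := congrArg Walk.length (take_spec (c.rotate x hx) hyrot)
    rw [Walk.length_append, walk_length_rotate] at hsplit
    have hdA : ((c.rotate x hx).takeUntil y hyrot).length = (c.rotate x hx).support.idxOf y :=
      length_takeUntil_eq_indexOf _ hyrot
    have hkxA : c.support.idxOf x = A.length := by rw [← hkx, hAlen]
    by_cases hyu : y = u
    · -- y = u
      subst hyu
      have hidxB : B.idxOf y = B.length - 1 := by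
        apply indexOf_getLast_nodup hBne (List.Nodup.of_append_right hnodup)
        have := List.getLast?_eq_getLast_of_ne_nil hBne
        rw [hBlast] at this
        exact (Option.some_inj.mp this).symm
      have hyrotidx : (c.rotate x hx).support.idxOf y = B.idxOf y + 1 := by
        rw [hrotsup, List.cons_append, List.idxOf_cons_ne _ (fun h => hxy h.symm),
          List.idxOf_append_of_mem huB]
      have hposy0 : c.support.idxOf y = 0 := by
        rw [hsup, hTs, List.cons_append, List.idxOf_cons_self]
      rw [hposy0, if_neg (by omega)]
      have hBpos : 1 ≤ B.length := List.length_pos_iff.mpr hBne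
      rw [hdA, hyrotidx, hidxB] at hsplit
      omega
    · -- y ≠ u
      have hposy : c.support.idxOf y = (A ++ B).idxOf y + 1 := by
        rw [hsup, hTs, List.cons_append, List.idxOf_cons_ne _ (Ne.symm hyu)]
      rcases hyAB with h1 | h1 | h1
      · exact absurd h1 hyu
      · -- y ∈ A
        have hyB : y ∉ B := hdisjAB y h1
        have hidxrot : (c.rotate x hx).support.idxOf y = B.length + 1 + A.idxOf y := by
          rw [hrotsup, List.idxOf_append_of_notMem (by simp [hxy, hyB])]
          simp only [List.length_cons]
          try omega
        have hidxc : c.support.idxOf y = A.idxOf y + 1 := by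
          rw [hposy, List.idxOf_append_of_mem h1]
        have hAidx : A.idxOf y < A.length := List.idxOf_lt_length_iff.mpr h1
        rw [if_neg (by omega)]
        rw [hdA, hidxrot] at hsplit
        omega
      · -- y ∈ B
        have hyA : y ∉ A := fun h => hdisjAB y h h1
        have hidxrot : (c.rotate x hx).support.idxOf y = B.idxOf y + 1 := by
          rw [hrotsup, List.cons_append, List.idxOf_cons_ne _ (fun h => hxy h.symm),
            List.idxOf_append_of_mem h1]
        have hidxc : c.support.idxOf y = A.length + B.idxOf y + 1 := by
          rw [hposy, List.idxOf_append_of_notMem hyA]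
          try omega
        have hBidx : B.idxOf y < B.length := List.idxOf_lt_length_iff.mpr h1
        rw [if_pos (by omega)]
        rw [hdA, hidxrot] at hsplit
        omega

lemma cyclic_pigeonhole {n s : ℕ} (hs : 2 ≤ s) (p : Fin s → ℕ)
    (hinj : Function.Injective p) (hlt : ∀ i, p i < n) :
    ∃ i j, i ≠ j ∧ (if p i < p j then p j - p i else n - p i + p j) ≤ n / s := by
  by_contra hcon
  push_neg at hcon
  obtain ⟨m, rfl⟩ : ∃ m, s = m + 1 := ⟨s - 1, by omega⟩
  set k := n / (m + 1) with hk
  have hcard : (Finset.image p Finset.univ).card = m + 1 := by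
    rw [Finset.card_image_of_injective _ hinj, Finset.card_univ, Fintype.card_fin]
  let e : Fin (m + 1) ≃o {x // x ∈ Finset.image p Finset.univ} :=
    (Finset.image p Finset.univ).orderIsoOfFin hcard
  have hpre : ∀ mm : Fin (m + 1), ∃ i, p i = (e mm : ℕ) := by
    intro mm
    obtain ⟨i, _, hi⟩ := Finset.mem_image.mp (e mm).2
    exact ⟨i, hi⟩
  have hgap : ∀ m1 m2 : Fin (m + 1), m1 < m2 → (e m1 : ℕ) + (k + 1) ≤ (e m2 : ℕ) := by
    intro m1 m2 h
    have hmono : (e m1 : ℕ) < (e m2 : ℕ) := by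
      exact_mod_cast e.strictMono h
    obtain ⟨i, hi⟩ := hpre m2
    obtain ⟨j, hj⟩ := hpre m1
    have hij : i ≠ j := by
      intro hh
      rw [hh, hj] at hi
      omega
    have := hcon j i hij.symm
    rw [hj, hi, if_pos hmono] at this
    omega
  have hm0 : (0 : ℕ) < m + 1 := by omega
  have hchain : ∀ mv : ℕ, ∀ h : mv < m + 1,
      (e ⟨0, hm0⟩ : ℕ) + mv * (k + 1) ≤ (e ⟨mv, h⟩ : ℕ) := by
    intro mv
    induction mv with
    | zero => intro h; simp
    | succ mm ih =>
      intro h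
      have h' : mm < m + 1 := by omega
      have h1 := ih h'
      have h2 := hgap ⟨mm, h'⟩ ⟨mm + 1, h⟩ (by simp [Fin.lt_def])
      calc (e ⟨0, hm0⟩ : ℕ) + (mm + 1) * (k + 1)
          = ((e ⟨0, hm0⟩ : ℕ) + mm * (k + 1)) + (k + 1) := by ring
        _ ≤ (e ⟨mm, h'⟩ : ℕ) + (k + 1) := by omega
        _ ≤ _ := h2
  have hmm : m < m + 1 := by omega
  have hlast := hchain m hmm
  obtain ⟨i, hi⟩ := hpre ⟨m, hmm⟩
  obtain ⟨j, hj⟩ := hpre ⟨0, hm0⟩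
  have hmono : (e ⟨0, hm0⟩ : ℕ) < (e ⟨m, hmm⟩ : ℕ) := by
    refine (by exact_mod_cast · : ((e ⟨0, hm0⟩ : {x // x ∈ _}) : ℕ) < _ → _) ?_
    exact e.strictMono (by simp [Fin.lt_def]; omega)
  have hij : i ≠ j := by
    intro hh
    rw [hh, hj] at hi
    omega
  have hwrap := hcon i j hij
  rw [hi, hj, if_neg (by omega)] at hwrap
  have hlti : (e ⟨m, hmm⟩ : ℕ) < n := hi ▸ hlt i
  have key : m * (k + 1) + (k + 1) ≤ n := by omega
  have hident : m * (k + 1) + (k + 1) = (m + 1) * k + (m + 1) := by ring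
  have hdm := Nat.div_add_mod n (m + 1)
  have hmod : n % (m + 1) < m + 1 := Nat.mod_lt _ (by omega)
  rw [← hk] at hdm
  obtain ⟨P, hP⟩ : ∃ P, P = m * (k + 1) := ⟨_, rfl⟩
  obtain ⟨Q, hQ⟩ : ∃ Q, Q = (m + 1) * k := ⟨_, rfl⟩
  rw [← hP] at key
  rw [← hP, ← hQ] at hident
  rw [← hQ] at hdm
  omega

end Helpers

/-- If a graph has two vertex-disjoint cycles of lengths `t ≥ t'` and no cycle longer than `t`,
then the bipartite graph between the cycles has no `K_{s,s}`, `s = ⌈t/t'⌉ + 2`. -/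
theorem max_cycle_no_Kss {V : Type} (G : SimpleGraph V) {a b : V}
    (c : G.Walk a a) (c' : G.Walk b b) (hc : c.IsCycle) (hc' : c'.IsCycle)
    (hdisj : ∀ x, x ∈ c.support → x ∉ c'.support)
    (hmax : ∀ (x : V) (w : G.Walk x x), w.IsCycle → w.length ≤ c.length) :
    ¬ ∃ (f g : Fin ((c.length + c'.length - 1) / c'.length + 2) → V),
        Function.Injective f ∧ Function.Injective g ∧
        (∀ i, f i ∈ c.support) ∧ (∀ i, g i ∈ c'.support) ∧
        ∀ i j, G.Adj (f i) (g j) := by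
  classical
  intro hex
  have ht : 3 ≤ c.length := hc.three_le_length
  have ht' : 3 ≤ c'.length := hc'.three_le_length
  have htt : c'.length ≤ c.length := hmax b c' hc'
  set s := (c.length + c'.length - 1) / c'.length + 2 with hsdef
  have hs2 : 2 ≤ s := hsdef ▸ Nat.le_add_left 2 _
  obtain ⟨f, g, hfinj, hginj, hfc, hgc, hadj⟩ := hex
  -- pigeonhole on c
  have hflt : ∀ i, c.support.idxOf (f i) < c.length := fun i =>
    indexOf_support_lt_length_closed hc.not_nil (hfc i)
  have hfposinj : Function.Injective (fun i => c.support.idxOf (f i)) := by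
    intro i j hij
    exact hfinj ((List.idxOf_inj (hfc i)).mp hij)
  obtain ⟨i1, i2, hine, hid⟩ := cyclic_pigeonhole hs2 _ hfposinj hflt
  try simp only at hid
  -- pigeonhole on c'
  have hglt : ∀ j, c'.support.idxOf (g j) < c'.length := fun j =>
    indexOf_support_lt_length_closed hc'.not_nil (hgc j)
  have hgposinj : Function.Injective (fun j => c'.support.idxOf (g j)) := by
    intro i j hij
    exact hginj ((List.idxOf_inj (hgc i)).mp hij)
  obtain ⟨j1, j2, hjne, hjd⟩ := cyclic_pigeonhole hs2 _ hgposinj hglt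
  try simp only at hjd
  -- arcs
  obtain ⟨P1, hP1path, hP1sub, hP1len⟩ :=
    arc_exists c hc (hfc i1) (hfc i2) (fun h => hine (hfinj h).symm)
  obtain ⟨P2, hP2path, hP2sub, hP2len⟩ :=
    arc_exists c' hc' (hgc j1) (hgc j2) (fun h => hjne (hginj h).symm)
  obtain ⟨dA, hdA⟩ : ∃ d, d = if c.support.idxOf (f i1) < c.support.idxOf (f i2)
      then c.support.idxOf (f i2) - c.support.idxOf (f i1)
      else c.length - c.support.idxOf (f i1) + c.support.idxOf (f i2) := ⟨_, rfl⟩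
  obtain ⟨dB, hdB⟩ : ∃ d, d = if c'.support.idxOf (g j1) < c'.support.idxOf (g j2)
      then c'.support.idxOf (g j2) - c'.support.idxOf (g j1)
      else c'.length - c'.support.idxOf (g j1) + c'.support.idxOf (g j2) := ⟨_, rfl⟩
  rw [← hdA] at hid hP1len
  rw [← hdB] at hjd hP2len
  -- the new cycle
  have e1 : G.Adj (f i1) (g j2) := hadj i1 j2
  have e2 : G.Adj (g j1) (f i2) := (hadj i2 j1).symm
  have hQpath : (P1.append (Walk.cons e1 P2)).IsPath := by
    apply Walk.IsPath.mk'
    have hQsup : (P1.append (Walk.cons e1 P2)).support = P1.support ++ P2.support := by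
      rw [Walk.support_append, Walk.support_cons, List.tail_cons]
    rw [hQsup]
    exact List.nodup_append'.mpr ⟨hP1path.support_nodup, hP2path.support_nodup,
      fun z hz1 hz2 => hdisj z (hP1sub z hz1) (hP2sub z hz2)⟩
  have hQedge : s(g j1, f i2) ∉ (P1.append (Walk.cons e1 P2)).edges := by
    intro he
    rw [Walk.edges_append, Walk.edges_cons] at he
    rcases List.mem_append.mp he with h1 | h1
    · exact hdisj (g j1) (hP1sub _ (Walk.fst_mem_support_of_mem_edges P1 h1)) (hgc j1)
    · rcases List.mem_cons.mp h1 with h2 | h2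
      · rcases Sym2.eq_iff.mp h2 with ⟨ha, hb⟩ | ⟨ha, hb⟩
        · exact hdisj (f i1) (hfc i1) (ha ▸ hgc j1)
        · exact hjne (hginj ha)
      · exact hdisj (f i2) (hfc i2) (hP2sub _ (Walk.snd_mem_support_of_mem_edges P2 h2))
  have hWcyc : (Walk.cons e2 (P1.append (Walk.cons e1 P2))).IsCycle :=
    (Walk.cons_isCycle_iff _ e2).mpr ⟨hQpath, hQedge⟩
  have hWle := hmax _ _ hWcyc
  have hWlen : (Walk.cons e2 (P1.append (Walk.cons e1 P2))).length
      = P1.length + P2.length + 2 := by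
    rw [Walk.length_cons, Walk.length_append, Walk.length_cons]
    omega
  -- arithmetic
  have hq : c.length ≤ c'.length * ((c.length + c'.length - 1) / c'.length) := by
    have hdm := Nat.div_add_mod (c.length + c'.length - 1) c'.length
    have hmod : (c.length + c'.length - 1) % c'.length < c'.length := Nat.mod_lt _ (by omega)
    obtain ⟨R, hR⟩ : ∃ r, r = c'.length * ((c.length + c'.length - 1) / c'.length) := ⟨_, rfl⟩
    rw [← hR] at hdm ⊢
    omega
  have hst : c.length + c'.length < s * c'.length := by
    have hmul : s * c'.length
        = c'.length * ((c.length + c'.length - 1) / c'.length) + 2 * c'.length := by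
      rw [hsdef]; ring
    obtain ⟨R, hR⟩ : ∃ r, r = c'.length * ((c.length + c'.length - 1) / c'.length) := ⟨_, rfl⟩
    obtain ⟨R2, hR2⟩ : ∃ r, r = s * c'.length := ⟨_, rfl⟩
    rw [← hR, ← hR2] at hmul
    rw [← hR] at hq
    rw [← hR2]
    omega
  obtain ⟨DA, hDAdef⟩ : ∃ x, x = c.length / s := ⟨_, rfl⟩
  obtain ⟨DB, hDBdef⟩ : ∃ x, x = c'.length / s := ⟨_, rfl⟩
  rw [← hDAdef] at hid
  rw [← hDBdef] at hjd
  have hdivs : DA + DB < c'.length := by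
    rw [hDAdef, hDBdef]
    have h1 : (c.length / s) * s ≤ c.length := Nat.div_mul_le_self _ _
    have h2 : (c'.length / s) * s ≤ c'.length := Nat.div_mul_le_self _ _
    by_contra hcc
    push_neg at hcc
    have h3 : c'.length * s ≤ (c.length / s + c'.length / s) * s :=
      Nat.mul_le_mul_right _ hcc
    rw [add_mul] at h3
    have h4 : c'.length * s = s * c'.length := mul_comm _ _
    obtain ⟨X, hX⟩ : ∃ x, x = (c.length / s) * s := ⟨_, rfl⟩
    obtain ⟨Y, hY⟩ : ∃ x, x = (c'.length / s) * s := ⟨_, rfl⟩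
    obtain ⟨Z, hZ⟩ : ∃ x, x = c'.length * s := ⟨_, rfl⟩
    obtain ⟨Z2, hZ2⟩ : ∃ x, x = s * c'.length := ⟨_, rfl⟩
    rw [← hX] at h1 h3
    rw [← hY] at h2 h3
    rw [← hZ] at h3 h4
    rw [← hZ2] at h4 hst
    omega
  omega
end
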